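/- arXiv:2603.14340 — 7 statements merged into one kernel-verified Lean document; each statement's English description precedes it below -/
import Mathlib

section
/- Let (Ω, μ) be a measure space with 0 < μ(Ω) < ∞ and let 1 ≤ r < p < ∞ be real numbers. Let U be a nonempty set of measurable functions u : Ω → ℝ such that every u ∈ U satisfies 0 < ‖u‖_{L^r(μ)} < ∞ and 0 < ‖u‖_{L^p(μ)} < ∞, and such that c·u ∈ U whenever u ∈ U and c > 0. Let F : U → ℝ satisfy F(c·u) = c^r·F(u) for all u ∈ U and c > 0, and suppose there exist constants A, B > 0 with A·‖u‖_{L^p}^r ≤ F(u) + B·‖u‖_{L^r}^r for all u ∈ U. Then the following are equivalent: (i) there exists ε > 0 such that F(u) ≥ ε·‖u‖_{L^r}^r for all u ∈ U; (ii) there exists ε > 0 such that F(u) ≥ ε·‖u‖_{L^p}^r for all u ∈ U. -/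
open MeasureTheory

/-- Lemma 5.1: positivity of the first nonlinear eigenvalue is
equivalent to positivity of the Yamabe constant, abstract form: let `(Ω, μ)` be a
measure space with `0 < μ(Ω) < ∞`, let `1 ≤ r < p`, let `U` be a nonempty set of
measurable functions with finite positive `L^r`- and `L^p`-norms that is closed under
positive scaling, and let `F : U → ℝ` be `r`-homogeneous and satisfy the Sobolev-type
inequality `A·‖u‖_p^r ≤ F(u) + B·‖u‖_r^r`.  Then `F(u) ≥ ε·‖u‖_r^r` on `U` for some
`ε > 0` iff `F(u) ≥ ε·‖u‖_p^r` on `U` for some `ε > 0`. -/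
theorem stmt_1 {Ω : Type*} [MeasurableSpace Ω] (μ : Measure Ω)
    (hμ0 : μ Set.univ ≠ 0) (hμfin : μ Set.univ ≠ ⊤)
    (r p : ℝ) (hr : 1 ≤ r) (hrp : r < p)
    (U : Set (Ω → ℝ)) (hUne : U.Nonempty)
    (hmeas : ∀ u ∈ U, Measurable u)
    (hLr0 : ∀ u ∈ U, eLpNorm u (ENNReal.ofReal r) μ ≠ 0)
    (hLrfin : ∀ u ∈ U, eLpNorm u (ENNReal.ofReal r) μ ≠ ⊤)
    (hLp0 : ∀ u ∈ U, eLpNorm u (ENNReal.ofReal p) μ ≠ 0)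
    (hLpfin : ∀ u ∈ U, eLpNorm u (ENNReal.ofReal p) μ ≠ ⊤)
    (hscale : ∀ u ∈ U, ∀ c : ℝ, 0 < c → (c • u) ∈ U)
    (F : (Ω → ℝ) → ℝ)
    (hFscale : ∀ u ∈ U, ∀ c : ℝ, 0 < c → F (c • u) = c ^ r * F u)
    (A B : ℝ) (hA : 0 < A) (hB : 0 < B)
    (hSob : ∀ u ∈ U,
      A * (eLpNorm u (ENNReal.ofReal p) μ).toReal ^ r
        ≤ F u + B * (eLpNorm u (ENNReal.ofReal r) μ).toReal ^ r) :
    (∃ ε > 0, ∀ u ∈ U,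
        ε * (eLpNorm u (ENNReal.ofReal r) μ).toReal ^ r ≤ F u)
    ↔ (∃ ε > 0, ∀ u ∈ U,
        ε * (eLpNorm u (ENNReal.ofReal p) μ).toReal ^ r ≤ F u) := by
  have hr0 : (0:ℝ) < r := lt_of_lt_of_le one_pos hr
  have hp0 : (0:ℝ) < p := hr0.trans hrp
  constructor
  · -- (i) ⇒ (ii): use the Sobolev inequality
    rintro ⟨ε, hε, hF⟩
    refine ⟨A * ε / (ε + B), by positivity, fun u hu => ?_⟩
    have h1 := hF u hu
    have h2 := hSob u hu
    set X := (eLpNorm u (ENNReal.ofReal p) μ).toReal ^ r with hX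
    set Y := (eLpNorm u (ENNReal.ofReal r) μ).toReal ^ r with hY
    rw [div_mul_eq_mul_div, div_le_iff₀ (by positivity)]
    have k1 : ε * (A * X) ≤ ε * (F u + B * Y) :=
      mul_le_mul_of_nonneg_left h2 hε.le
    have k2 : B * (ε * Y) ≤ B * F u := mul_le_mul_of_nonneg_left h1 hB.le
    nlinarith
  · -- (ii) ⇒ (i): use Hölder (L^p ↪ L^r on a finite measure space)
    rintro ⟨ε, hε, hF⟩
    set c : ℝ := ((μ Set.univ) ^ (1/r - 1/p)).toReal with hc
    have hcne : (μ Set.univ) ^ (1/r - 1/p) ≠ ⊤ :=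
      by simp [ENNReal.rpow_eq_top_iff, hμ0, hμfin]
    have hcne0 : (μ Set.univ) ^ (1/r - 1/p) ≠ 0 := by
      simp [ENNReal.rpow_eq_zero_iff, hμ0, hμfin]
    have hcpos : 0 < c := ENNReal.toReal_pos hcne0 hcne
    refine ⟨ε / c ^ r, by positivity, fun u hu => ?_⟩
    have hhold : eLpNorm u (ENNReal.ofReal r) μ
        ≤ eLpNorm u (ENNReal.ofReal p) μ * (μ Set.univ) ^ (1/r - 1/p) := by
      have := eLpNorm_le_eLpNorm_mul_rpow_measure_univ
        (ENNReal.ofReal_le_ofReal hrp.le) (μ := μ)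
        (hmeas u hu).aestronglyMeasurable
      simpa [ENNReal.toReal_ofReal hr0.le, ENNReal.toReal_ofReal hp0.le] using this
    have hholdR : (eLpNorm u (ENNReal.ofReal r) μ).toReal
        ≤ (eLpNorm u (ENNReal.ofReal p) μ).toReal * c := by
      rw [hc, ← ENNReal.toReal_mul]
      exact ENNReal.toReal_mono (ENNReal.mul_ne_top (hLpfin u hu) hcne) hhold
    have hXnn : (0:ℝ) ≤ (eLpNorm u (ENNReal.ofReal p) μ).toReal :=
      ENNReal.toReal_nonneg
    have hYnn : (0:ℝ) ≤ (eLpNorm u (ENNReal.ofReal r) μ).toReal :=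
      ENNReal.toReal_nonneg
    have hpow : (eLpNorm u (ENNReal.ofReal r) μ).toReal ^ r
        ≤ (eLpNorm u (ENNReal.ofReal p) μ).toReal ^ r * c ^ r := by
      rw [← Real.mul_rpow hXnn hcpos.le]
      exact Real.rpow_le_rpow hYnn hholdR hr0.le
    have hcr : (0:ℝ) < c ^ r := Real.rpow_pos_of_pos hcpos r
    calc ε / c ^ r * (eLpNorm u (ENNReal.ofReal r) μ).toReal ^ r
        ≤ ε / c ^ r * ((eLpNorm u (ENNReal.ofReal p) μ).toReal ^ r * c ^ r) := by
          apply mul_le_mul_of_nonneg_left hpow (by positivity)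
      _ = ε * (eLpNorm u (ENNReal.ofReal p) μ).toReal ^ r := by
          field_simp
      _ ≤ F u := hF u hu
end

section
/- For every integer k ≥ 1 and every smooth f : ℝ × ℝ^{n+1} → ℝ one has, identically, Σ_{i=0}^n x^i·( t·Δ̃^k(x^i f) − x^i·Δ̃^k(t f) ) = −2k·t·X(Δ̃^{k−1} f) − 2k·Q·∂_t(Δ̃^{k−1} f). (The left-hand side equals Σ_i x^i( t[Δ̃^k, x^i]f − x^i[Δ̃^k, t]f ); since the metric gradient of t with respect to g̃ = −dt² + Σ(dx^i)² is ∇̃t = −∂_t, the right-hand side is the paper's −2k t̃ X Δ̃^{k−1} + 2k Q (∇̃t̃) Δ̃^{k−1}.) -/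
/-- The flat Fefferman–Graham ambient space `ℝ × ℝ^{n+1}` of the standard conformal
`n`-sphere, with coordinates `(t, x⁰, …, xⁿ)`. -/
abbrev Amb (n : ℕ) : Type := ℝ × (Fin (n+1) → ℝ)

/-- The partial derivative `∂_t`. -/
noncomputable def ptD {n : ℕ} (f : Amb n → ℝ) (p : Amb n) : ℝ :=
  fderiv ℝ f p (1, 0)

/-- The partial derivative `∂_{xⁱ}`. -/
noncomputable def pxD {n : ℕ} (i : Fin (n+1)) (f : Amb n → ℝ) (p : Amb n) : ℝ :=
  fderiv ℝ f p (0, Pi.single i 1)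

/-- The flat ambient Laplacian `Δ̃f = ∂_t²f − Σᵢ ∂_{xⁱ}²f` (convention `Δ ≥ 0` for the
metric `g̃ = −dt² + Σᵢ (dxⁱ)²`). -/
noncomputable def LapA {n : ℕ} (f : Amb n → ℝ) : Amb n → ℝ :=
  fun p => ptD (fun q => ptD f q) p - ∑ i, pxD i (fun q => pxD i f q) p

/-- The Euler (dilation) operator `Xf = t∂_t f + Σᵢ xⁱ∂_{xⁱ} f`. -/
noncomputable def EulerA {n : ℕ} (f : Amb n → ℝ) (p : Amb n) : ℝ :=
  p.1 * ptD f p + ∑ i, p.2 i * pxD i f p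

/-- The function `Q(t,x) = |x|² − t²`. -/
def QA {n : ℕ} (p : Amb n) : ℝ := (∑ i, (p.2 i)^2) - p.1^2

/-- The half-space `{(t,x) : t > 0}`. -/
def HS (n : ℕ) : Set (Amb n) := {p | 0 < p.1}

lemma one_le_top' : (1 : WithTop ℕ∞) ≤ ((⊤ : ℕ∞) : WithTop ℕ∞) := by
  norm_cast

lemma two_le_top' : (2 : WithTop ℕ∞) ≤ ((⊤ : ℕ∞) : WithTop ℕ∞) := by
  norm_cast

noncomputable def Dv {n : ℕ} (v : Amb n) (f : Amb n → ℝ) : Amb n → ℝ :=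
  fun p => fderiv ℝ f p v

lemma contDiff_Dv {n : ℕ} (v : Amb n) {f : Amb n → ℝ} (hf : ContDiff ℝ (⊤ : ℕ∞) f) :
    ContDiff ℝ (⊤ : ℕ∞) (Dv v f) :=
  (hf.fderiv_right (le_refl _)).clm_apply contDiff_const

lemma diffAt {n : ℕ} {E : Type*} [NormedAddCommGroup E] [NormedSpace ℝ E]
    {f : Amb n → E} (hf : ContDiff ℝ (⊤ : ℕ∞) f) (p : Amb n) :
    DifferentiableAt ℝ f p :=
  (hf.differentiable (by simp)).differentiableAt

lemma Dv_comm {n : ℕ} (v w : Amb n) {f : Amb n → ℝ} (hf : ContDiff ℝ (⊤ : ℕ∞) f)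
    (p : Amb n) : Dv v (Dv w f) p = Dv w (Dv v f) p := by
  have hsym : IsSymmSndFDerivAt ℝ f p := hf.contDiffAt.isSymmSndFDerivAt (by rw [minSmoothness_of_isRCLikeNormedField]; exact two_le_top')
  have hF : ContDiff ℝ (⊤ : ℕ∞) (fderiv ℝ f) := hf.fderiv_right (le_refl _)
  have key : ∀ u z : Amb n, Dv u (Dv z f) p = fderiv ℝ (fderiv ℝ f) p u z := by
    intro u z
    rw [show Dv u (Dv z f) p = fderiv ℝ (fun q => (fderiv ℝ f q) z) p u from rfl]
    rw [fderiv_clm_apply (diffAt hF p) (differentiableAt_const z)]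
    simp
  rw [key, key, hsym v w]

lemma Dv_add {n : ℕ} (v : Amb n) {f g : Amb n → ℝ} (hf : ContDiff ℝ (⊤:ℕ∞) f)
    (hg : ContDiff ℝ (⊤:ℕ∞) g) (p : Amb n) :
    Dv v (fun q => f q + g q) p = Dv v f p + Dv v g p := by
  unfold Dv
  rw [fderiv_fun_add (diffAt hf p) (diffAt hg p)]
  rfl

lemma Dv_const_mul {n : ℕ} (v : Amb n) (c : ℝ) {f : Amb n → ℝ} (hf : ContDiff ℝ (⊤:ℕ∞) f)
    (p : Amb n) : Dv v (fun q => c * f q) p = c * Dv v f p := by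
  unfold Dv
  rw [fderiv_const_mul (diffAt hf p)]
  rfl

lemma Dv_mul {n : ℕ} (v : Amb n) {g f : Amb n → ℝ} (hg : ContDiff ℝ (⊤:ℕ∞) g)
    (hf : ContDiff ℝ (⊤:ℕ∞) f) (p : Amb n) :
    Dv v (fun q => g q * f q) p = Dv v g p * f p + g p * Dv v f p := by
  unfold Dv
  rw [fderiv_fun_mul (diffAt hg p) (diffAt hf p)]
  simp [mul_comm]
  ring

lemma contDiff_fst' {n : ℕ} : ContDiff ℝ (⊤:ℕ∞) (fun q : Amb n => q.1) := contDiff_fst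

lemma contDiff_coord {n : ℕ} (i : Fin (n+1)) :
    ContDiff ℝ (⊤:ℕ∞) (fun q : Amb n => q.2 i) :=
  ((ContinuousLinearMap.proj i).comp (ContinuousLinearMap.snd ℝ ℝ (Fin (n+1) → ℝ))).contDiff

lemma Dv_fst {n : ℕ} (v : Amb n) (p : Amb n) : Dv v (fun q : Amb n => q.1) p = v.1 := by
  unfold Dv
  rw [show (fun q : Amb n => q.1) = ⇑(ContinuousLinearMap.fst ℝ ℝ (Fin (n+1) → ℝ)) from rfl,
    ContinuousLinearMap.fderiv]
  rfl

lemma Dv_coord {n : ℕ} (v : Amb n) (i : Fin (n+1)) (p : Amb n) :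
    Dv v (fun q : Amb n => q.2 i) p = v.2 i := by
  unfold Dv
  rw [show (fun q : Amb n => q.2 i) =
      ⇑((ContinuousLinearMap.proj i).comp (ContinuousLinearMap.snd ℝ ℝ (Fin (n+1) → ℝ)))
      from rfl, ContinuousLinearMap.fderiv]
  rfl

/-- basis vectors -/
def e0 {n : ℕ} : Amb n := (1, 0)
def ex {n : ℕ} (i : Fin (n+1)) : Amb n := (0, Pi.single i 1)

lemma ptD_eq {n : ℕ} (f : Amb n → ℝ) : ptD f = Dv e0 f := rfl
lemma pxD_eq {n : ℕ} (i : Fin (n+1)) (f : Amb n → ℝ) : pxD i f = Dv (ex i) f := rfl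

lemma LapA_eq {n : ℕ} (f : Amb n → ℝ) :
    LapA f = fun p => Dv e0 (Dv e0 f) p - ∑ i, Dv (ex i) (Dv (ex i) f) p := rfl

lemma contDiff_LapA {n : ℕ} {f : Amb n → ℝ} (hf : ContDiff ℝ (⊤:ℕ∞) f) :
    ContDiff ℝ (⊤:ℕ∞) (LapA f) := by
  rw [LapA_eq]
  exact (contDiff_Dv _ (contDiff_Dv _ hf)).sub
    (ContDiff.sum fun i _ => contDiff_Dv _ (contDiff_Dv _ hf))

lemma contDiff_LapA_iter {n : ℕ} (k : ℕ) {f : Amb n → ℝ} (hf : ContDiff ℝ (⊤:ℕ∞) f) :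
    ContDiff ℝ (⊤:ℕ∞) (LapA^[k] f) := by
  induction k with
  | zero => exact hf
  | succ m ih => rw [Function.iterate_succ_apply']; exact contDiff_LapA ih

lemma Dv_sub {n : ℕ} (v : Amb n) {f g : Amb n → ℝ} (hf : ContDiff ℝ (⊤:ℕ∞) f)
    (hg : ContDiff ℝ (⊤:ℕ∞) g) (p : Amb n) :
    Dv v (fun q => f q - g q) p = Dv v f p - Dv v g p := by
  unfold Dv
  rw [fderiv_fun_sub (diffAt hf p) (diffAt hg p)]
  rfl

lemma Dv_sum {n : ℕ} (v : Amb n) {F : Fin (n+1) → Amb n → ℝ}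
    (hF : ∀ i, ContDiff ℝ (⊤:ℕ∞) (F i)) (p : Amb n) :
    Dv v (fun q => ∑ i, F i q) p = ∑ i, Dv v (F i) p := by
  unfold Dv
  rw [fderiv_fun_sum (fun i _ => diffAt (hF i) p)]
  simp

lemma Dv_LapA {n : ℕ} (v : Amb n) {f : Amb n → ℝ} (hf : ContDiff ℝ (⊤:ℕ∞) f) (p : Amb n) :
    Dv v (LapA f) p = LapA (Dv v f) p := by
  have swap3 : ∀ w : Amb n, Dv w (Dv w (Dv v f)) p = Dv v (Dv w (Dv w f)) p := by
    intro w
    have h1 : Dv w (Dv v f) = Dv v (Dv w f) := funext fun q => Dv_comm w v hf q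
    calc Dv w (Dv w (Dv v f)) p = Dv w (Dv v (Dv w f)) p := by rw [h1]
      _ = Dv v (Dv w (Dv w f)) p := Dv_comm w v (contDiff_Dv _ hf) p
  rw [LapA_eq]
  rw [Dv_sub v (contDiff_Dv _ (contDiff_Dv _ hf))
    (ContDiff.sum fun i _ => contDiff_Dv _ (contDiff_Dv _ hf)) p]
  rw [Dv_sum v (fun i => contDiff_Dv _ (contDiff_Dv _ hf)) p]
  rw [LapA_eq]
  simp only [← swap3]

/-- second derivative of a coordinate times f, where `L` is linear with constant
derivative `dL v` -/
lemma Dv2_coordmul {n : ℕ} (w : Amb n) {L f : Amb n → ℝ} (hL : ContDiff ℝ (⊤:ℕ∞) L)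
    (hf : ContDiff ℝ (⊤:ℕ∞) f) (dL : Amb n → ℝ)
    (hdL : ∀ v q, Dv v L q = dL v) (p : Amb n) :
    Dv w (Dv w (fun q => L q * f q)) p
      = 2 * dL w * Dv w f p + L p * Dv w (Dv w f) p := by
  have h1 : Dv w (fun q => L q * f q) = fun q => dL w * f q + L q * Dv w f q := by
    funext q
    rw [Dv_mul w hL hf q, hdL w q]
  rw [h1]
  rw [Dv_add w (contDiff_const.mul hf) (hL.mul (contDiff_Dv _ hf)) p]
  rw [Dv_const_mul w (dL w) hf p]
  rw [Dv_mul w hL (contDiff_Dv _ hf) p, hdL w p]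
  ring

lemma LapA_fst_mul {n : ℕ} {f : Amb n → ℝ} (hf : ContDiff ℝ (⊤:ℕ∞) f) (p : Amb n) :
    LapA (fun q => q.1 * f q) p = p.1 * LapA f p + 2 * Dv e0 f p := by
  have hc := contDiff_fst' (n := n)
  rw [LapA_eq, LapA_eq]
  beta_reduce
  rw [Dv2_coordmul e0 hc hf (fun v => v.1) (fun v q => Dv_fst v q) p]
  have hx : ∀ i : Fin (n+1), Dv (ex i) (Dv (ex i) (fun q => q.1 * f q)) p
      = 2 * 0 * Dv (ex i) f p + p.1 * Dv (ex i) (Dv (ex i) f) p := by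
    intro i
    exact Dv2_coordmul (ex i) hc hf (fun v => v.1) (fun v q => Dv_fst v q) p
  simp only [hx]
  have he : (e0 : Amb n).1 = (1:ℝ) := rfl
  simp only [he, zero_mul, mul_zero, zero_add, ← Finset.mul_sum]
  ring

lemma LapA_coord_mul {n : ℕ} (j : Fin (n+1)) {f : Amb n → ℝ}
    (hf : ContDiff ℝ (⊤:ℕ∞) f) (p : Amb n) :
    LapA (fun q => q.2 j * f q) p = p.2 j * LapA f p - 2 * Dv (ex j) f p := by
  have hc := contDiff_coord (n := n) j
  rw [LapA_eq, LapA_eq]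
  beta_reduce
  rw [Dv2_coordmul e0 hc hf (fun v => v.2 j) (fun v q => Dv_coord v j q) p]
  have hx : ∀ i : Fin (n+1), Dv (ex i) (Dv (ex i) (fun q => q.2 j * f q)) p
      = 2 * (Pi.single i 1 : Fin (n+1) → ℝ) j * Dv (ex i) f p + p.2 j * Dv (ex i) (Dv (ex i) f) p := by
    intro i
    exact Dv2_coordmul (ex i) hc hf (fun v => v.2 j) (fun v q => Dv_coord v j q) p
  simp only [hx]
  rw [Finset.sum_add_distrib]
  have hsing : ∑ i : Fin (n+1), 2 * (Pi.single i 1 : Fin (n+1) → ℝ) j * Dv (ex i) f p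
      = 2 * Dv (ex j) f p := by
    rw [Finset.sum_eq_single j]
    · simp
    · intro b _ hb
      rw [Pi.single_apply]
      simp [Ne.symm hb]
    · simp
  rw [hsing]
  have he : (e0 : Amb n).2 j = (0:ℝ) := rfl
  simp only [he, zero_mul, mul_zero, zero_add, ← Finset.mul_sum]
  ring

lemma LapA_add {n : ℕ} {f g : Amb n → ℝ} (hf : ContDiff ℝ (⊤:ℕ∞) f)
    (hg : ContDiff ℝ (⊤:ℕ∞) g) (p : Amb n) :
    LapA (fun q => f q + g q) p = LapA f p + LapA g p := by
  have h2 : ∀ w : Amb n, Dv w (Dv w (fun q => f q + g q)) p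
      = Dv w (Dv w f) p + Dv w (Dv w g) p := by
    intro w
    have h1 : Dv w (fun q => f q + g q) = fun q => Dv w f q + Dv w g q :=
      funext fun q => Dv_add w hf hg q
    rw [h1, Dv_add w (contDiff_Dv _ hf) (contDiff_Dv _ hg) p]
  rw [LapA_eq, LapA_eq, LapA_eq]
  beta_reduce
  simp only [h2, Finset.sum_add_distrib]
  ring

lemma LapA_const_mul {n : ℕ} (c : ℝ) {f : Amb n → ℝ} (hf : ContDiff ℝ (⊤:ℕ∞) f)
    (p : Amb n) : LapA (fun q => c * f q) p = c * LapA f p := by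
  have h2 : ∀ w : Amb n, Dv w (Dv w (fun q => c * f q)) p = c * Dv w (Dv w f) p := by
    intro w
    have h1 : Dv w (fun q => c * f q) = fun q => c * Dv w f q :=
      funext fun q => Dv_const_mul w c hf q
    rw [h1, Dv_const_mul w c (contDiff_Dv _ hf) p]
  rw [LapA_eq, LapA_eq]
  beta_reduce
  simp only [h2, ← Finset.mul_sum]
  ring

lemma LapA_iter_fst_mul {n : ℕ} (k : ℕ) {f : Amb n → ℝ} (hf : ContDiff ℝ (⊤:ℕ∞) f) :
    ∀ p : Amb n, LapA^[k+1] (fun q => q.1 * f q) p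
      = p.1 * LapA^[k+1] f p + (2 * ((k:ℝ)+1)) * Dv e0 (LapA^[k] f) p := by
  induction k with
  | zero =>
    intro p
    simpa using LapA_fst_mul hf p
  | succ m ih =>
    intro p
    rw [Function.iterate_succ_apply' LapA (m+1) (fun q => q.1 * f q)]
    have hfun : LapA^[m+1] (fun q => q.1 * f q)
        = fun q => q.1 * LapA^[m+1] f q + (2 * ((m:ℝ)+1)) * Dv e0 (LapA^[m] f) q :=
      funext ih
    rw [hfun]
    have hA : ContDiff ℝ (⊤:ℕ∞) (fun q : Amb n => q.1 * LapA^[m+1] f q) :=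
      contDiff_fst'.mul (contDiff_LapA_iter _ hf)
    have hB : ContDiff ℝ (⊤:ℕ∞)
        (fun q : Amb n => (2 * ((m:ℝ)+1)) * Dv e0 (LapA^[m] f) q) :=
      contDiff_const.mul (contDiff_Dv e0 (contDiff_LapA_iter m hf))
    rw [LapA_add hA hB p]
    rw [LapA_fst_mul (contDiff_LapA_iter (m+1) hf) p]
    rw [LapA_const_mul _ (contDiff_Dv e0 (contDiff_LapA_iter m hf)) p]
    rw [← Dv_LapA e0 (contDiff_LapA_iter m hf) p]
    rw [← Function.iterate_succ_apply' LapA m f]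
    rw [← Function.iterate_succ_apply' LapA (m+1) f]
    push_cast
    ring

lemma LapA_iter_coord_mul {n : ℕ} (k : ℕ) (j : Fin (n+1)) {f : Amb n → ℝ}
    (hf : ContDiff ℝ (⊤:ℕ∞) f) :
    ∀ p : Amb n, LapA^[k+1] (fun q => q.2 j * f q) p
      = p.2 j * LapA^[k+1] f p - (2 * ((k:ℝ)+1)) * Dv (ex j) (LapA^[k] f) p := by
  induction k with
  | zero =>
    intro p
    simpa using LapA_coord_mul j hf p
  | succ m ih =>
    intro p
    rw [Function.iterate_succ_apply' LapA (m+1) (fun q => q.2 j * f q)]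
    have hfun : LapA^[m+1] (fun q => q.2 j * f q)
        = fun q => q.2 j * LapA^[m+1] f q + (-(2 * ((m:ℝ)+1))) * Dv (ex j) (LapA^[m] f) q := by
      funext q
      rw [ih q]; ring
    rw [hfun]
    have hA : ContDiff ℝ (⊤:ℕ∞) (fun q : Amb n => q.2 j * LapA^[m+1] f q) :=
      (contDiff_coord j).mul (contDiff_LapA_iter _ hf)
    have hB : ContDiff ℝ (⊤:ℕ∞)
        (fun q : Amb n => (-(2 * ((m:ℝ)+1))) * Dv (ex j) (LapA^[m] f) q) :=
      contDiff_const.mul (contDiff_Dv _ (contDiff_LapA_iter m hf))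
    rw [LapA_add hA hB p]
    rw [LapA_coord_mul j (contDiff_LapA_iter (m+1) hf) p]
    rw [LapA_const_mul _ (contDiff_Dv _ (contDiff_LapA_iter m hf)) p]
    rw [← Dv_LapA (ex j) (contDiff_LapA_iter m hf) p]
    rw [← Function.iterate_succ_apply' LapA m f]
    rw [← Function.iterate_succ_apply' LapA (m+1) f]
    push_cast
    ring


/-- Lemma 6.2, eqn (6.1): for every `k ≥ 1` and smooth `f`,
`Σᵢ xⁱ(t·Δ̃^k(xⁱf) − xⁱ·Δ̃^k(tf)) = −2k·t·X(Δ̃^{k−1}f) − 2k·Q·∂_t(Δ̃^{k−1}f)`. -/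
theorem stmt_2 (n k : ℕ) (hn : 1 ≤ n) (hk : 1 ≤ k)
    (f : Amb n → ℝ) (hf : ContDiff ℝ (⊤ : ℕ∞) f) (p : Amb n) :
    ∑ i, p.2 i * (p.1 * LapA^[k] (fun q => q.2 i * f q) p
        - p.2 i * LapA^[k] (fun q => q.1 * f q) p)
      = -(2*(k:ℝ)) * p.1 * EulerA (LapA^[k-1] f) p
        - 2*(k:ℝ) * QA p * ptD (LapA^[k-1] f) p := by
  obtain ⟨m, rfl⟩ : ∃ m, k = m + 1 := ⟨k - 1, (Nat.succ_pred_eq_of_pos hk).symm⟩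
  simp only [Nat.add_sub_cancel]
  have hsummand : ∀ i, p.2 i * (p.1 * LapA^[m+1] (fun q => q.2 i * f q) p
        - p.2 i * LapA^[m+1] (fun q => q.1 * f q) p)
      = (-(2*((m:ℝ)+1)) * p.1) * (p.2 i * Dv (ex i) (LapA^[m] f) p)
        - (2*((m:ℝ)+1) * Dv e0 (LapA^[m] f) p) * (p.2 i)^2 := by
    intro i
    rw [LapA_iter_coord_mul m i hf p, LapA_iter_fst_mul m hf p]
    ring
  rw [Finset.sum_congr rfl (fun i _ => hsummand i)]
  rw [Finset.sum_sub_distrib, ← Finset.mul_sum, ← Finset.mul_sum]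
  rw [EulerA, QA]
  simp only [pxD_eq, ptD_eq]
  push_cast
  ring
end

section
/- For every integer k ≥ 1 and all smooth u, v : ℝ × ℝ^{n+1} → ℝ one has, identically, Σ_{i=0}^n x^i·( t·Δ̃^k(u·∂_{x^i}v) + x^i·Δ̃^k(u·∂_t v) ) = t·Δ̃^k( u·(Xv − k·v) ) − k·t·Δ̃^{k−1}( u·Δ̃v − v·Δ̃u ) + Q·Δ̃^k( u·∂_t v ). (Since the metric gradients with respect to g̃ are ∇̃x^i = ∂_{x^i} and ∇̃t = −∂_t, this is the paper's identity Σ x̃^i( t̃Δ̃^k(ũ(∇̃x̃^i)ṽ) − x̃^iΔ̃^k(ũ(∇̃t̃)ṽ) ) = t̃Δ̃^k(ũ(X−k)ṽ) − kt̃Δ̃^{k−1}(ũΔ̃ṽ − ṽΔ̃ũ) − QΔ̃^k(ũ(∇̃t̃)ṽ).) -/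
namespace S3
variable {n : ℕ}

abbrev SM (f : Amb n → ℝ) : Prop := ContDiff ℝ (⊤ : ℕ∞) f

noncomputable def dd (w : Amb n) (f : Amb n → ℝ) (p : Amb n) : ℝ := fderiv ℝ f p w

lemma sm_dd {f : Amb n → ℝ} (hf : SM f) (w : Amb n) : SM (dd w f) :=
  (hf.fderiv_right (m := (⊤:ℕ∞)) (by simp)).clm_apply contDiff_const

lemma diff_of_sm {f : Amb n → ℝ} (hf : SM f) : Differentiable ℝ f :=
  hf.differentiable (by simp)

lemma dd_add {f g : Amb n → ℝ} (hf : SM f) (hg : SM g) (w : Amb n) :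
    dd w (fun q => f q + g q) = fun p => dd w f p + dd w g p := by
  funext p
  simp [dd, fderiv_fun_add (diff_of_sm hf p) (diff_of_sm hg p)]

lemma dd_cmul {f : Amb n → ℝ} (hf : SM f) (c : ℝ) (w : Amb n) :
    dd w (fun q => c * f q) = fun p => c * dd w f p := by
  funext p
  simp [dd, fderiv_const_mul (diff_of_sm hf p) c]

lemma dd_mul {f g : Amb n → ℝ} (hf : SM f) (hg : SM g) (w : Amb n) :
    dd w (fun q => f q * g q) = fun p => f p * dd w g p + g p * dd w f p := by
  funext p
  simp [dd, fderiv_fun_mul (diff_of_sm hf p) (diff_of_sm hg p)]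

lemma dd_comm {f : Amb n → ℝ} (hf : SM f) (w w' : Amb n) :
    dd w (dd w' f) = dd w' (dd w f) := by
  funext p
  have hdiff : DifferentiableAt ℝ (fderiv ℝ f) p :=
    ((hf.fderiv_right (m := (⊤:ℕ∞)) (by simp)).differentiable (by simp)) p
  have key : ∀ a b : Amb n, dd a (dd b f) p = fderiv ℝ (fderiv ℝ f) p a b := by
    intro a b
    have : dd a (dd b f) p = fderiv ℝ (fun q => (fderiv ℝ f q) b) p a := rfl
    rw [this, fderiv_clm_apply hdiff (differentiableAt_const b)]
    simp
  rw [key, key]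
  exact (hf.contDiffAt.isSymmSndFDerivAt (by rw [minSmoothness_of_isRCLikeNormedField]; exact WithTop.coe_le_coe.mpr (le_top : ((2:ℕ):ℕ∞) ≤ ⊤))) w w'
end S3

namespace S3
variable {n : ℕ}

lemma dd_sub {f g : Amb n → ℝ} (hf : SM f) (hg : SM g) (w : Amb n) :
    dd w (fun q => f q - g q) = fun p => dd w f p - dd w g p := by
  funext p
  simp [dd, fderiv_fun_sub (diff_of_sm hf p) (diff_of_sm hg p)]

lemma dd_sum {ι : Type*} {s : Finset ι} {F : ι → Amb n → ℝ} (hF : ∀ i, SM (F i)) (w : Amb n) :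
    dd w (fun q => ∑ i ∈ s, F i q) = fun p => ∑ i ∈ s, dd w (F i) p := by
  funext p
  simp [dd, fderiv_fun_sum (fun i _ => diff_of_sm (hF i) p)]

noncomputable def et : Amb n := (1, 0)
noncomputable def ex (i : Fin (n+1)) : Amb n := (0, Pi.single i 1)

@[simp] lemma et_fst : (et (n := n)).1 = 1 := rfl
@[simp] lemma et_snd (i : Fin (n+1)) : (et (n := n)).2 i = 0 := rfl
@[simp] lemma ex_fst (i : Fin (n+1)) : (ex (n := n) i).1 = 0 := rfl
@[simp] lemma ex_snd (i j : Fin (n+1)) : (ex (n := n) i).2 j = (Pi.single i 1 : Fin (n+1) → ℝ) j := rfl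

lemma sm_x (i : Fin (n+1)) : SM (fun q : Amb n => q.2 i) :=
  ((ContinuousLinearMap.proj i : (Fin (n+1) → ℝ) →L[ℝ] ℝ).contDiff).comp contDiff_snd

lemma dd_mt {f : Amb n → ℝ} (hf : SM f) (w : Amb n) :
    dd w (fun q => q.1 * f q) = fun p => p.1 * dd w f p + w.1 * f p := by
  funext p
  rw [dd, fderiv_fun_mul differentiableAt_fst (diff_of_sm hf p)]
  have : fderiv ℝ (fun q : Amb n => q.1) p = ContinuousLinearMap.fst ℝ ℝ (Fin (n+1) → ℝ) :=
    fderiv_fst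
  simp [dd, this]
  ring

lemma dd_mx {f : Amb n → ℝ} (hf : SM f) (i : Fin (n+1)) (w : Amb n) :
    dd w (fun q => q.2 i * f q) = fun p => p.2 i * dd w f p + w.2 i * f p := by
  funext p
  rw [dd, fderiv_fun_mul (diff_of_sm (sm_x i) p) (diff_of_sm hf p)]
  have : fderiv ℝ (fun q : Amb n => q.2 i) p =
      (ContinuousLinearMap.proj i).comp (ContinuousLinearMap.snd ℝ ℝ (Fin (n+1) → ℝ)) :=
    (((ContinuousLinearMap.proj i : (Fin (n+1) → ℝ) →L[ℝ] ℝ).comp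
      (ContinuousLinearMap.snd ℝ ℝ (Fin (n+1) → ℝ))).hasFDerivAt).fderiv
  simp [dd, this]
  ring

end S3

namespace S3
variable {n : ℕ}

lemma dd_dd_mt {f : Amb n → ℝ} (hf : SM f) (w w' : Amb n) :
    dd w (dd w' (fun q => q.1 * f q)) =
      fun p => p.1 * dd w (dd w' f) p + w'.1 * dd w f p + w.1 * dd w' f p := by
  rw [dd_mt hf w']
  have h1 : SM (fun q : Amb n => q.1 * dd w' f q) := contDiff_fst.mul (sm_dd hf w')
  have h2 : SM (fun q : Amb n => w'.1 * f q) := contDiff_const.mul hf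
  simp only [dd_add h1 h2 w, dd_mt (sm_dd hf w') w, dd_cmul hf w'.1 w]
  funext p; ring

lemma dd_dd_mx {f : Amb n → ℝ} (hf : SM f) (i : Fin (n+1)) (w w' : Amb n) :
    dd w (dd w' (fun q => q.2 i * f q)) =
      fun p => p.2 i * dd w (dd w' f) p + w'.2 i * dd w f p + w.2 i * dd w' f p := by
  rw [dd_mx hf i w']
  have h1 : SM (fun q : Amb n => q.2 i * dd w' f q) := (sm_x i).mul (sm_dd hf w')
  have h2 : SM (fun q : Amb n => w'.2 i * f q) := contDiff_const.mul hf
  simp only [dd_add h1 h2 w, dd_mx (sm_dd hf w') i w, dd_cmul hf (w'.2 i) w]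
  funext p; ring

end S3

namespace S3
variable {n : ℕ}

/-- The partial derivative `∂_t`. -/
noncomputable def ptD' (f : Amb n → ℝ) (p : Amb n) : ℝ := fderiv ℝ f p (1, 0)
noncomputable def LapA' (f : Amb n → ℝ) : Amb n → ℝ :=
  fun p => dd et (dd et f) p - ∑ i, dd (ex i) (dd (ex i) f) p

lemma sm_lap {f : Amb n → ℝ} (hf : SM f) : SM (LapA' f) :=
  (sm_dd (sm_dd hf et) et).sub (ContDiff.sum fun i _ => sm_dd (sm_dd hf (ex i)) (ex i))

lemma lap_add {f g : Amb n → ℝ} (hf : SM f) (hg : SM g) :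
    LapA' (fun q => f q + g q) = fun p => LapA' f p + LapA' g p := by
  unfold LapA'
  simp only [dd_add hf hg et, fun i => dd_add hf hg (ex i),
    dd_add (sm_dd hf et) (sm_dd hg et) et,
    fun i => dd_add (sm_dd hf (ex i)) (sm_dd hg (ex i)) (ex i)]
  funext p
  rw [Finset.sum_add_distrib]
  ring

lemma lap_sub {f g : Amb n → ℝ} (hf : SM f) (hg : SM g) :
    LapA' (fun q => f q - g q) = fun p => LapA' f p - LapA' g p := by
  unfold LapA'
  simp only [dd_sub hf hg et, fun i => dd_sub hf hg (ex i),
    dd_sub (sm_dd hf et) (sm_dd hg et) et,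
    fun i => dd_sub (sm_dd hf (ex i)) (sm_dd hg (ex i)) (ex i)]
  funext p
  rw [Finset.sum_sub_distrib]
  ring

lemma lap_cmul {f : Amb n → ℝ} (hf : SM f) (c : ℝ) :
    LapA' (fun q => c * f q) = fun p => c * LapA' f p := by
  unfold LapA'
  simp only [dd_cmul hf c et, fun i => dd_cmul hf c (ex i),
    dd_cmul (sm_dd hf et) c et,
    fun i => dd_cmul (sm_dd hf (ex i)) c (ex i)]
  funext p
  rw [← Finset.mul_sum]
  ring

lemma lap_sum {F : Fin (n+1) → Amb n → ℝ} (hF : ∀ i, SM (F i)) :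
    LapA' (fun q => ∑ i, F i q) = fun p => ∑ i, LapA' (F i) p := by
  unfold LapA'
  simp only [fun (w : Amb n) => dd_sum (s := (Finset.univ : Finset (Fin (n+1)))) hF w]
  simp only [fun (w w' : Amb n) => dd_sum (s := (Finset.univ : Finset (Fin (n+1))))
    (F := fun j => dd w' (F j)) (fun j => sm_dd (hF j) w') w]
  funext p
  rw [Finset.sum_comm (γ := Fin (n+1)) (s := Finset.univ) (t := Finset.univ)]
  rw [← Finset.sum_sub_distrib]

lemma dd_lap {f : Amb n → ℝ} (hf : SM f) (w : Amb n) :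
    dd w (LapA' f) = LapA' (dd w f) := by
  unfold LapA'
  rw [dd_sub (sm_dd (sm_dd hf et) et)
      (ContDiff.sum fun i _ => sm_dd (sm_dd hf (ex i)) (ex i)) w]
  rw [dd_sum (fun i => sm_dd (sm_dd hf (ex i)) (ex i)) w]
  funext p
  congr 1
  · rw [dd_comm (sm_dd hf et) w et, dd_comm hf w et]
  · refine Finset.sum_congr rfl fun i _ => ?_
    rw [dd_comm (sm_dd hf (ex i)) w (ex i), dd_comm hf w (ex i)]

end S3

namespace S3
variable {n : ℕ}

lemma sm_iter {f : Amb n → ℝ} (hf : SM f) (k : ℕ) : SM (LapA'^[k] f) := by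
  induction k with
  | zero => exact hf
  | succ m ih => rw [Function.iterate_succ_apply']; exact sm_lap ih

lemma iter_add {f g : Amb n → ℝ} (hf : SM f) (hg : SM g) (k : ℕ) :
    LapA'^[k] (fun q => f q + g q) = fun p => LapA'^[k] f p + LapA'^[k] g p := by
  induction k generalizing f g with
  | zero => rfl
  | succ m ih =>
    rw [Function.iterate_succ_apply, lap_add hf hg, ih (sm_lap hf) (sm_lap hg)]
    funext p
    rw [Function.iterate_succ_apply, Function.iterate_succ_apply]

lemma iter_sub {f g : Amb n → ℝ} (hf : SM f) (hg : SM g) (k : ℕ) :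
    LapA'^[k] (fun q => f q - g q) = fun p => LapA'^[k] f p - LapA'^[k] g p := by
  induction k generalizing f g with
  | zero => rfl
  | succ m ih =>
    rw [Function.iterate_succ_apply, lap_sub hf hg, ih (sm_lap hf) (sm_lap hg)]
    funext p
    rw [Function.iterate_succ_apply, Function.iterate_succ_apply]

lemma iter_cmul {f : Amb n → ℝ} (hf : SM f) (c : ℝ) (k : ℕ) :
    LapA'^[k] (fun q => c * f q) = fun p => c * LapA'^[k] f p := by
  induction k generalizing f with
  | zero => rfl
  | succ m ih =>
    rw [Function.iterate_succ_apply, lap_cmul hf, ih (sm_lap hf)]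
    funext p
    rw [Function.iterate_succ_apply]

lemma iter_sum {F : Fin (n+1) → Amb n → ℝ} (hF : ∀ i, SM (F i)) (k : ℕ) :
    LapA'^[k] (fun q => ∑ i, F i q) = fun p => ∑ i, LapA'^[k] (F i) p := by
  induction k generalizing F with
  | zero => rfl
  | succ m ih =>
    rw [Function.iterate_succ_apply, lap_sum hF, ih (fun i => sm_lap (hF i))]
    funext p
    refine Finset.sum_congr rfl fun i _ => ?_
    rw [Function.iterate_succ_apply]

lemma dd_iter {f : Amb n → ℝ} (hf : SM f) (w : Amb n) (k : ℕ) :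
    dd w (LapA'^[k] f) = LapA'^[k] (dd w f) := by
  induction k generalizing f with
  | zero => rfl
  | succ m ih =>
    rw [Function.iterate_succ_apply, ih (sm_lap hf), dd_lap hf w,
      ← Function.iterate_succ_apply]

lemma lap_mt {f : Amb n → ℝ} (hf : SM f) :
    LapA' (fun q => q.1 * f q) = fun p => p.1 * LapA' f p + 2 * dd et f p := by
  unfold LapA'
  simp only [dd_dd_mt hf]
  funext p
  simp only [et_fst, et_snd, ex_fst, one_mul, zero_mul, add_zero, ← Finset.mul_sum]
  ring

lemma lap_mx {f : Amb n → ℝ} (hf : SM f) (i : Fin (n+1)) :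
    LapA' (fun q => q.2 i * f q) = fun p => p.2 i * LapA' f p - 2 * dd (ex i) f p := by
  unfold LapA'
  simp only [dd_dd_mx hf i]
  funext p
  simp only [et_fst, et_snd, ex_fst, ex_snd, zero_mul, add_zero, zero_add, one_mul,
    Pi.single_apply, Finset.sum_add_distrib, ite_mul, Finset.sum_ite_eq, Finset.mem_univ,
    if_true, ← Finset.mul_sum]
  ring

end S3

namespace S3
variable {n : ℕ}

lemma iter_mt {f : Amb n → ℝ} (hf : SM f) (k : ℕ) :
    LapA'^[k+1] (fun q => q.1 * f q) =
      fun p => p.1 * LapA'^[k+1] f p + 2 * ((k:ℝ) + 1) * LapA'^[k] (dd et f) p := by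
  induction k with
  | zero =>
    simp only [zero_add, Function.iterate_one, Function.iterate_zero, id_eq, Nat.cast_zero]
    rw [lap_mt hf]; funext p; ring
  | succ m ih =>
    rw [Function.iterate_succ_apply', ih]
    have h1 : SM (fun q : Amb n => q.1 * LapA'^[m+1] f q) :=
      contDiff_fst.mul (sm_iter hf (m+1))
    have h2 : SM (fun q : Amb n => 2 * ((m:ℝ) + 1) * LapA'^[m] (dd et f) q) :=
      contDiff_const.mul (sm_iter (sm_dd hf et) m)
    rw [lap_add h1 h2, lap_mt (sm_iter hf (m+1)), lap_cmul (sm_iter (sm_dd hf et) m)]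
    funext p
    rw [dd_iter hf et (m+1), ← Function.iterate_succ_apply' LapA' (m+1) f,
      ← Function.iterate_succ_apply' LapA' m (dd et f)]
    push_cast
    ring

lemma iter_mx {f : Amb n → ℝ} (hf : SM f) (i : Fin (n+1)) (k : ℕ) :
    LapA'^[k+1] (fun q => q.2 i * f q) =
      fun p => p.2 i * LapA'^[k+1] f p - 2 * ((k:ℝ) + 1) * LapA'^[k] (dd (ex i) f) p := by
  induction k with
  | zero =>
    simp only [zero_add, Function.iterate_one, Function.iterate_zero, id_eq, Nat.cast_zero]
    rw [lap_mx hf i]; funext p; ring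
  | succ m ih =>
    rw [Function.iterate_succ_apply', ih]
    have h1 : SM (fun q : Amb n => q.2 i * LapA'^[m+1] f q) :=
      (sm_x i).mul (sm_iter hf (m+1))
    have h2 : SM (fun q : Amb n => 2 * ((m:ℝ) + 1) * LapA'^[m] (dd (ex i) f) q) :=
      contDiff_const.mul (sm_iter (sm_dd hf (ex i)) m)
    rw [lap_sub h1 h2, lap_mx (sm_iter hf (m+1)) i, lap_cmul (sm_iter (sm_dd hf (ex i)) m)]
    funext p
    rw [dd_iter hf (ex i) (m+1), ← Function.iterate_succ_apply' LapA' (m+1) f,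
      ← Function.iterate_succ_apply' LapA' m (dd (ex i) f)]
    push_cast
    ring

lemma dd_dd_mul {u v : Amb n → ℝ} (hu : SM u) (hv : SM v) (w w' : Amb n) :
    dd w (dd w' (fun q => u q * v q)) =
      fun p => u p * dd w (dd w' v) p + dd w' v p * dd w u p
        + dd w v p * dd w' u p + v p * dd w (dd w' u) p := by
  rw [dd_mul hu hv w']
  simp only [dd_add (hu.mul (sm_dd hv w')) (hv.mul (sm_dd hu w')) w,
    dd_mul hu (sm_dd hv w') w, dd_mul hv (sm_dd hu w') w]
  funext p; ring

lemma key {u v : Amb n → ℝ} (hu : SM u) (hv : SM v) :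
    (fun q => LapA' (fun r => u r * v r) q + (u q * LapA' v q - v q * LapA' u q)) =
      fun q => 2 * dd et (fun r => u r * dd et v r) q
        - 2 * ∑ i, dd (ex i) (fun r => u r * dd (ex i) v r) q := by
  unfold LapA'
  simp only [dd_dd_mul hu hv, fun w => dd_mul hu (sm_dd hv w) w]
  funext q
  simp only [Finset.sum_add_distrib, ← Finset.mul_sum]
  ring

end S3

namespace S3
variable {n : ℕ}

lemma main (m : ℕ) (u v : Amb n → ℝ) (hu : SM u) (hv : SM v) (p : Amb n) :
    ∑ i, p.2 i * (p.1 * LapA'^[m+1] (fun q => u q * dd (ex i) v q) p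
        + p.2 i * LapA'^[m+1] (fun q => u q * dd et v q) p)
      = p.1 * LapA'^[m+1]
          (fun q => u q * ((q.1 * dd et v q + ∑ j, q.2 j * dd (ex j) v q) - ((m+1:ℕ):ℝ) * v q)) p
        - ((m+1:ℕ):ℝ) * p.1 * LapA'^[m] (fun q => u q * LapA' v q - v q * LapA' u q) p
        + ((∑ i, (p.2 i)^2) - p.1^2) * LapA'^[m+1] (fun q => u q * dd et v q) p := by
  have hW : SM (fun q : Amb n => u q * dd et v q) := hu.mul (sm_dd hv et)
  have hWi : ∀ i, SM (fun q : Amb n => u q * dd (ex i) v q) := fun i => hu.mul (sm_dd hv (ex i))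
  have hUV : SM (fun q : Amb n => u q * v q) := hu.mul hv
  have hG : SM (fun q : Amb n => u q * LapA' v q - v q * LapA' u q) :=
    (hu.mul (sm_lap hv)).sub (hv.mul (sm_lap hu))
  -- split the Euler factor
  have hsplit : (fun q : Amb n =>
        u q * ((q.1 * dd et v q + ∑ j, q.2 j * dd (ex j) v q) - ((m+1:ℕ):ℝ) * v q))
      = fun q => (q.1 * (u q * dd et v q) + ∑ j, q.2 j * (u q * dd (ex j) v q))
          + (-((m+1:ℕ):ℝ)) * (u q * v q) := by
    funext q
    have h : ∑ j, q.2 j * (u q * dd (ex j) v q) = u q * ∑ j, q.2 j * dd (ex j) v q := by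
      rw [Finset.mul_sum]; exact Finset.sum_congr rfl fun j _ => by ring
    rw [h]; ring
  have hF1 : SM (fun q : Amb n =>
      q.1 * (u q * dd et v q) + ∑ j, q.2 j * (u q * dd (ex j) v q)) :=
    (contDiff_fst.mul hW).add (ContDiff.sum fun j _ => (sm_x j).mul (hWi j))
  have hF2 : SM (fun q : Amb n => (-((m+1:ℕ):ℝ)) * (u q * v q)) := contDiff_const.mul hUV
  have A2 : ∀ i, LapA'^[m+1] (fun q : Amb n => q.2 i * (u q * dd (ex i) v q)) =
      fun p => p.2 i * LapA'^[m+1] (fun q => u q * dd (ex i) v q) p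
        - 2 * ((m:ℝ) + 1) * LapA'^[m] (dd (ex i) (fun q => u q * dd (ex i) v q)) p :=
    fun i => iter_mx (hWi i) i m
  rw [hsplit]
  simp only [iter_add hF1 hF2 (m+1),
    iter_add (contDiff_fst.mul hW) (ContDiff.sum fun j _ => (sm_x j).mul (hWi j)) (m+1),
    iter_sum (fun j => (sm_x j).mul (hWi j)) (m+1),
    iter_cmul hUV (-((m+1:ℕ):ℝ)) (m+1),
    iter_mt hW m, A2]
  -- the key cancellation, propagated through `LapA'^[m]`
  have keyB : LapA'^[m] (fun q => LapA' (fun r => u r * v r) q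
        + (u q * LapA' v q - v q * LapA' u q))
      = LapA'^[m] (fun q => 2 * dd et (fun r => u r * dd et v r) q
        - 2 * ∑ i, dd (ex i) (fun r => u r * dd (ex i) v r) q) := by
    rw [key hu hv]
  have Bp := congrFun keyB p
  rw [congrFun (iter_add (sm_lap hUV) hG m) p,
    congrFun (iter_sub (contDiff_const.mul (sm_dd hW et))
      (contDiff_const.mul (ContDiff.sum fun i _ => sm_dd (hWi i) (ex i))) m) p,
    congrFun (iter_cmul (sm_dd hW et) 2 m) p,
    congrFun (iter_cmul (ContDiff.sum fun i _ => sm_dd (hWi i) (ex i)) 2 m) p,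
    congrFun (iter_sum (fun i => sm_dd (hWi i) (ex i)) m) p] at Bp
  -- expand the left-hand sum
  have hexpand : ∑ i, p.2 i * (p.1 * LapA'^[m+1] (fun q => u q * dd (ex i) v q) p
        + p.2 i * LapA'^[m+1] (fun q => u q * dd et v q) p)
      = p.1 * (∑ i, p.2 i * LapA'^[m+1] (fun q => u q * dd (ex i) v q) p)
        + (∑ i, (p.2 i)^2) * LapA'^[m+1] (fun q => u q * dd et v q) p := by
    rw [Finset.mul_sum, Finset.sum_mul, ← Finset.sum_add_distrib]
    exact Finset.sum_congr rfl fun i _ => by ring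
  have hsplit2 : ∑ i, (p.2 i * LapA'^[m+1] (fun q => u q * dd (ex i) v q) p
        - 2 * ((m:ℝ) + 1) * LapA'^[m] (dd (ex i) (fun q => u q * dd (ex i) v q)) p)
      = (∑ i, p.2 i * LapA'^[m+1] (fun q => u q * dd (ex i) v q) p)
        - 2 * ((m:ℝ) + 1) * ∑ i, LapA'^[m] (dd (ex i) (fun q => u q * dd (ex i) v q)) p := by
    rw [Finset.sum_sub_distrib, Finset.mul_sum]
  have hUViter : LapA'^[m+1] (fun q : Amb n => u q * v q) p
      = LapA'^[m] (LapA' (fun q : Amb n => u q * v q)) p := by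
    rw [Function.iterate_succ_apply]
  rw [hexpand, hsplit2, hUViter]
  push_cast
  linear_combination ((m:ℝ) + 1) * p.1 * Bp

end S3


/-- Lemma 6.2, eqn (6.2): for every `k ≥ 1` and smooth `u, v`,
`Σᵢ xⁱ(t·Δ̃^k(u·∂_{xⁱ}v) + xⁱ·Δ̃^k(u·∂_t v))
  = t·Δ̃^k(u·(Xv − kv)) − k·t·Δ̃^{k−1}(u·Δ̃v − v·Δ̃u) + Q·Δ̃^k(u·∂_t v)`. -/
theorem stmt_3 (n k : ℕ) (hn : 1 ≤ n) (hk : 1 ≤ k)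
    (u v : Amb n → ℝ) (hu : ContDiff ℝ (⊤ : ℕ∞) u) (hv : ContDiff ℝ (⊤ : ℕ∞) v)
    (p : Amb n) :
    ∑ i, p.2 i * (p.1 * LapA^[k] (fun q => u q * pxD i v q) p
        + p.2 i * LapA^[k] (fun q => u q * ptD v q) p)
      = p.1 * LapA^[k] (fun q => u q * (EulerA v q - (k:ℝ) * v q)) p
        - (k:ℝ) * p.1 * LapA^[k-1] (fun q => u q * LapA v q - v q * LapA u q) p
        + QA p * LapA^[k] (fun q => u q * ptD v q) p := by
  obtain ⟨m, rfl⟩ : ∃ m, k = m + 1 := ⟨k - 1, (Nat.succ_pred_eq_of_pos hk).symm⟩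
  simp only [Nat.add_sub_cancel]
  exact S3.main m u v hu hv p
end

section
/- Let k ≥ 1 be an integer and w, w′ ∈ ℝ. Let f and h be smooth functions on the half-space {(t,x) : t > 0} ⊂ ℝ × ℝ^{n+1} satisfying Xf = w′·f and Xh = (w−2)·h pointwise. Then the function D_{k,w,w′}[f](Q·h) vanishes at every point of {t > 0} at which |x| = t (that is, on the null cone {Q = 0} ∩ {t > 0}). -/
/-- The ascending Pochhammer symbol `P_j(z) = z(z+1)⋯(z+j−1)`. -/
noncomputable def poch (z : ℝ) (j : ℕ) : ℝ := Polynomial.eval z (ascPochhammer ℝ j)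

/-- The Case–Yan building block
`D_{m,w,w′}[f](u) = Σ_{a+b=m} C(m,a)·P_a((n−2m)/2+w)·P_b(−w−w′−(n−2m)/2)·Δ̃^a(f·Δ̃^b u)`. -/
noncomputable def CY {n : ℕ} (m : ℕ) (w w' : ℝ) (f u : Amb n → ℝ) : Amb n → ℝ :=
  fun p => ∑ ab ∈ Finset.HasAntidiagonal.antidiagonal m,
    ((m.choose ab.1 : ℝ) * poch (((n:ℝ) - 2*(m:ℝ))/2 + w) ab.1
      * poch (-w - w' - ((n:ℝ) - 2*(m:ℝ))/2) ab.2)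
    * LapA^[ab.1] (fun q => f q * LapA^[ab.2] u q) p

section Aux
variable {n : ℕ}

lemma isOpen_HS : IsOpen (HS n) := isOpen_lt continuous_const continuous_fst

/-- smooth-at-every-point-of-HS predicate -/
def SmA (n : ℕ) (f : Amb n → ℝ) : Prop := ∀ p ∈ HS n, ContDiffAt ℝ (⊤:ℕ∞) f p

lemma top_le_coe_top : (2 : WithTop ℕ∞) ≤ ((⊤:ℕ∞) : WithTop ℕ∞) := by
  rw [show ((2:WithTop ℕ∞)) = (((2:ℕ∞)):WithTop ℕ∞) by rfl]
  exact WithTop.coe_le_coe.2 le_top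

lemma one_le_coe_top : (1 : WithTop ℕ∞) ≤ ((⊤:ℕ∞) : WithTop ℕ∞) := by
  rw [show ((1:WithTop ℕ∞)) = (((1:ℕ∞)):WithTop ℕ∞) by rfl]
  exact WithTop.coe_le_coe.2 le_top

lemma succ_coe_top : ((⊤:ℕ∞) : WithTop ℕ∞) + 1 ≤ ((⊤:ℕ∞) : WithTop ℕ∞) := by
  rw [show ((1:WithTop ℕ∞)) = (((1:ℕ∞)):WithTop ℕ∞) by rfl]
  rw [← WithTop.coe_add]
  exact WithTop.coe_le_coe.2 le_top

lemma SmA.diff {f : Amb n → ℝ} (hf : SmA n f) {p : Amb n} (hp : p ∈ HS n) :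
    DifferentiableAt ℝ f p := (hf p hp).differentiableAt (by simp)

lemma SmA.dD {f : Amb n → ℝ} (hf : SmA n f) (v : Amb n) :
    SmA n (fun q => fderiv ℝ f q v) := fun p hp =>
  ((hf p hp).fderiv_right succ_coe_top).clm_apply contDiffAt_const

lemma SmA.dt {f : Amb n → ℝ} (hf : SmA n f) : SmA n (ptD f) := hf.dD _
lemma SmA.dx {f : Amb n → ℝ} (hf : SmA n f) (i : Fin (n+1)) : SmA n (pxD i f) := hf.dD _

lemma SmA.add {f g : Amb n → ℝ} (hf : SmA n f) (hg : SmA n g) :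
    SmA n (fun q => f q + g q) := fun p hp => (hf p hp).add (hg p hp)
lemma SmA.mul {f g : Amb n → ℝ} (hf : SmA n f) (hg : SmA n g) :
    SmA n (fun q => f q * g q) := fun p hp => (hf p hp).mul (hg p hp)
lemma SmA.const_mul {f : Amb n → ℝ} (hf : SmA n f) (c : ℝ) :
    SmA n (fun q => c * f q) := fun p hp => contDiffAt_const.mul (hf p hp)
lemma SmA.sum {ι : Type*} {s : Finset ι} {F : ι → Amb n → ℝ} (hF : ∀ i ∈ s, SmA n (F i)) :
    SmA n (fun q => ∑ i ∈ s, F i q) := fun p hp => ContDiffAt.sum (fun i hi => hF i hi p hp)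

lemma smA_fst : SmA n (fun q : Amb n => q.1) := fun p _ => contDiff_fst.contDiffAt
lemma smA_coord (i : Fin (n+1)) : SmA n (fun q : Amb n => q.2 i) := fun p _ =>
  (((ContinuousLinearMap.proj i).comp (ContinuousLinearMap.snd ℝ ℝ (Fin (n+1) → ℝ))).contDiff).contDiffAt

lemma SmA.lap {f : Amb n → ℝ} (hf : SmA n f) : SmA n (LapA f) := by
  have h1 : SmA n (fun p => ptD (fun q => ptD f q) p - ∑ i, pxD i (fun q => pxD i f q) p) := by
    intro p hp
    exact ((hf.dt.dt p hp).sub (ContDiffAt.sum (fun i _ => ((hf.dx i).dx i) p hp)))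
  exact h1

lemma SmA.iterLap {f : Amb n → ℝ} (hf : SmA n f) : ∀ a, SmA n (LapA^[a] f) := by
  intro a; induction a with
  | zero => exact hf
  | succ a ih => rw [Function.iterate_succ_apply']; exact ih.lap

lemma SmA.euler {f : Amb n → ℝ} (hf : SmA n f) : SmA n (EulerA f) := by
  have : SmA n (fun p : Amb n => p.1 * ptD f p + ∑ i, p.2 i * pxD i f p) :=
    (smA_fst.mul hf.dt).add (SmA.sum (fun i _ => (smA_coord i).mul (hf.dx i)))
  exact this

lemma contDiff_QA : ContDiff ℝ (⊤:ℕ∞) (QA (n:=n)) := by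
  have : ContDiff ℝ (⊤:ℕ∞) (fun p : Amb n => (∑ i, (p.2 i)^2) - p.1^2) := by
    apply ContDiff.sub
    · exact ContDiff.sum (fun i _ =>
        ((((ContinuousLinearMap.proj i).comp (ContinuousLinearMap.snd ℝ ℝ (Fin (n+1) → ℝ))).contDiff)).pow 2)
    · exact contDiff_fst.pow 2
  exact this

lemma smA_QA : SmA n (QA (n:=n)) := fun p _ => contDiff_QA.contDiffAt

end Aux

section Aux2
variable {n : ℕ}

lemma eqOn_eventuallyEq {f g : Amb n → ℝ} (hfg : Set.EqOn f g (HS n)) {p : Amb n}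
    (hp : p ∈ HS n) : f =ᶠ[nhds p] g :=
  Filter.eventuallyEq_of_mem (isOpen_HS.mem_nhds hp) hfg

lemma dD_congr {f g : Amb n → ℝ} (hfg : Set.EqOn f g (HS n)) {p : Amb n}
    (hp : p ∈ HS n) (v : Amb n) : fderiv ℝ f p v = fderiv ℝ g p v := by
  rw [(eqOn_eventuallyEq hfg hp).fderiv_eq]

lemma dD_add {f g : Amb n → ℝ} {p : Amb n} (hf : DifferentiableAt ℝ f p)
    (hg : DifferentiableAt ℝ g p) (v : Amb n) :
    fderiv ℝ (fun q => f q + g q) p v = fderiv ℝ f p v + fderiv ℝ g p v := by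
  rw [fderiv_fun_add hf hg]; rfl

lemma dD_sum {ι : Type*} {s : Finset ι} {F : ι → Amb n → ℝ} {p : Amb n}
    (hF : ∀ i ∈ s, DifferentiableAt ℝ (F i) p) (v : Amb n) :
    fderiv ℝ (fun q => ∑ i ∈ s, F i q) p v = ∑ i ∈ s, fderiv ℝ (F i) p v := by
  rw [fderiv_fun_sum hF]; simp

lemma dD_mul {f g : Amb n → ℝ} {p : Amb n} (hf : DifferentiableAt ℝ f p)
    (hg : DifferentiableAt ℝ g p) (v : Amb n) :
    fderiv ℝ (fun q => f q * g q) p v = f p * fderiv ℝ g p v + g p * fderiv ℝ f p v := by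
  rw [fderiv_fun_mul hf hg]; simp

lemma dD_const_mul {f : Amb n → ℝ} {p : Amb n} (hf : DifferentiableAt ℝ f p) (c : ℝ)
    (v : Amb n) : fderiv ℝ (fun q => c * f q) p v = c * fderiv ℝ f p v := by
  rw [fderiv_const_mul hf c]; simp

lemma dD_fst (p v : Amb n) : fderiv ℝ (fun q : Amb n => q.1) p v = v.1 := by
  have : fderiv ℝ (fun q : Amb n => q.1) p = ContinuousLinearMap.fst ℝ ℝ (Fin (n+1) → ℝ) := by
    exact (ContinuousLinearMap.fst ℝ ℝ (Fin (n+1) → ℝ)).fderiv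
  rw [this]; rfl

lemma diff_fst {p : Amb n} : DifferentiableAt ℝ (fun q : Amb n => q.1) p :=
  (ContinuousLinearMap.fst ℝ ℝ (Fin (n+1) → ℝ)).differentiableAt

lemma dD_coord (i : Fin (n+1)) (p v : Amb n) :
    fderiv ℝ (fun q : Amb n => q.2 i) p v = v.2 i := by
  have : fderiv ℝ (fun q : Amb n => q.2 i) p
      = ((ContinuousLinearMap.proj i).comp (ContinuousLinearMap.snd ℝ ℝ (Fin (n+1) → ℝ))) :=
    (((ContinuousLinearMap.proj i).comp (ContinuousLinearMap.snd ℝ ℝ (Fin (n+1) → ℝ)))).fderiv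
  rw [this]; rfl

lemma diff_coord {i : Fin (n+1)} {p : Amb n} :
    DifferentiableAt ℝ (fun q : Amb n => q.2 i) p :=
  (((ContinuousLinearMap.proj i).comp (ContinuousLinearMap.snd ℝ ℝ (Fin (n+1) → ℝ)))).differentiableAt

lemma dD_QA (p v : Amb n) :
    fderiv ℝ (QA (n:=n)) p v = (∑ i, 2 * p.2 i * v.2 i) - 2 * p.1 * v.1 := by
  have hQ : (QA (n:=n)) = fun q : Amb n => (∑ i, (fun r : Amb n => r.2 i * r.2 i) q) + (-1) * ((fun r : Amb n => r.1 * r.1) q) := by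
    funext q; simp only [QA]; rw [Finset.sum_congr rfl (fun i _ => sq (q.2 i))]; ring
  rw [hQ]
  rw [dD_add (by fun_prop) (by fun_prop)]
  rw [dD_sum (fun i _ => by fun_prop)]
  rw [dD_const_mul (by fun_prop)]
  rw [dD_mul diff_fst diff_fst]
  rw [dD_fst]
  have : ∀ i : Fin (n+1), fderiv ℝ (fun r : Amb n => r.2 i * r.2 i) p v = 2 * p.2 i * v.2 i := by
    intro i
    rw [dD_mul diff_coord diff_coord, dD_coord]; ring
  simp only [this]; ring

/-- symmetry of second derivatives -/
lemma dD_comm {f : Amb n → ℝ} {p : Amb n} (hf : ContDiffAt ℝ (⊤:ℕ∞) f p) (v w : Amb n) :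
    fderiv ℝ (fun q => fderiv ℝ f q v) p w = fderiv ℝ (fun q => fderiv ℝ f q w) p v := by
  have hd : DifferentiableAt ℝ (fderiv ℝ f) p :=
    ((hf.fderiv_right succ_coe_top)).differentiableAt (by simp)
  have key : ∀ u z : Amb n, fderiv ℝ (fun q => fderiv ℝ f q u) p z
      = fderiv ℝ (fderiv ℝ f) p z u := by
    intro u z
    have := fderiv_clm_apply hd (differentiableAt_const u)
    rw [this]; simp
  rw [key, key]
  exact (hf.isSymmSndFDerivAt (by rw [minSmoothness_of_isRCLikeNormedField]; exact top_le_coe_top)).eq w v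

section Aux3
variable {n : ℕ}

lemma dD_sub {f g : Amb n → ℝ} {p : Amb n} (hf : DifferentiableAt ℝ f p)
    (hg : DifferentiableAt ℝ g p) (v : Amb n) :
    fderiv ℝ (fun q => f q - g q) p v = fderiv ℝ f p v - fderiv ℝ g p v := by
  rw [fderiv_fun_sub hf hg]; rfl

/-- second derivative as iterated fderiv -/
lemma dD_dD {f : Amb n → ℝ} {p : Amb n} (hf : ContDiffAt ℝ (⊤:ℕ∞) f p) (u z : Amb n) :
    fderiv ℝ (fun q => fderiv ℝ f q u) p z = fderiv ℝ (fderiv ℝ f) p z u := by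
  have hd : DifferentiableAt ℝ (fderiv ℝ f) p :=
    ((hf.fderiv_right succ_coe_top)).differentiableAt (by simp)
  have := fderiv_clm_apply hd (differentiableAt_const u)
  rw [this]; simp

lemma euler_eq_dD (f : Amb n → ℝ) (p : Amb n) : EulerA f p = fderiv ℝ f p p := by
  have hp2 : (p : Amb n) = (p.1 • (((1:ℝ), (0 : Fin (n+1) → ℝ)) : Amb n))
      + ∑ i, p.2 i • (((0:ℝ), Pi.single i 1) : Amb n) := by
    apply Prod.ext
    · simp [Prod.fst_sum]
    · funext j
      simp [Prod.snd_sum, Finset.sum_apply, Pi.single_apply]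
  have h2 := congrArg (fderiv ℝ f p) hp2
  rw [h2, map_add, map_smul, map_sum]
  simp only [EulerA, ptD, pxD, map_smul, smul_eq_mul]

/-- the Euler commutator at first-derivative level -/
lemma dD_euler {g : Amb n → ℝ} {p : Amb n} (hg : ContDiffAt ℝ (⊤:ℕ∞) g p) (v : Amb n) :
    fderiv ℝ (EulerA g) p v
      = fderiv ℝ g p v + EulerA (fun q => fderiv ℝ g q v) p := by
  have hd : DifferentiableAt ℝ (fderiv ℝ g) p :=
    ((hg.fderiv_right succ_coe_top)).differentiableAt (by simp)
  have hEg : EulerA g = fun q => (fderiv ℝ g q) q := by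
    funext q; exact euler_eq_dD g q
  rw [hEg]
  rw [fderiv_clm_apply hd differentiableAt_fun_id]
  simp only [ContinuousLinearMap.add_apply, ContinuousLinearMap.comp_apply,
    ContinuousLinearMap.flip_apply, fderiv_id', ContinuousLinearMap.coe_id', id_eq]
  rw [euler_eq_dD, dD_dD hg v p, (hg.isSymmSndFDerivAt (by rw [minSmoothness_of_isRCLikeNormedField]; exact top_le_coe_top)).eq v p]

lemma euler_mul {f g : Amb n → ℝ} {p : Amb n} (hf : DifferentiableAt ℝ f p)
    (hg : DifferentiableAt ℝ g p) :
    EulerA (fun q => f q * g q) p = f p * EulerA g p + g p * EulerA f p := by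
  rw [euler_eq_dD, euler_eq_dD, euler_eq_dD, dD_mul hf hg]

lemma euler_const_mul {f : Amb n → ℝ} {p : Amb n} (hf : DifferentiableAt ℝ f p) (c : ℝ) :
    EulerA (fun q => c * f q) p = c * EulerA f p := by
  rw [euler_eq_dD, euler_eq_dD, dD_const_mul hf]

lemma euler_add {f g : Amb n → ℝ} {p : Amb n} (hf : DifferentiableAt ℝ f p)
    (hg : DifferentiableAt ℝ g p) :
    EulerA (fun q => f q + g q) p = EulerA f p + EulerA g p := by
  rw [euler_eq_dD, euler_eq_dD, euler_eq_dD, dD_add hf hg]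

end Aux3

section Aux4
variable {n : ℕ}

lemma lap_congr {f g : Amb n → ℝ} (hfg : Set.EqOn f g (HS n)) {p : Amb n} (hp : p ∈ HS n) :
    LapA f p = LapA g p := by
  have ht : Set.EqOn (fun q => ptD f q) (fun q => ptD g q) (HS n) :=
    fun q hq => dD_congr hfg hq _
  have hx : ∀ i, Set.EqOn (fun q => pxD i f q) (fun q => pxD i g q) (HS n) :=
    fun i q hq => dD_congr hfg hq _
  simp only [LapA]
  rw [show ptD (fun q => ptD f q) p = ptD (fun q => ptD g q) p from dD_congr ht hp _]
  congr 1
  exact Finset.sum_congr rfl fun i _ => dD_congr (hx i) hp _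

lemma lap_iter_congr {f g : Amb n → ℝ} (hfg : Set.EqOn f g (HS n)) :
    ∀ a, Set.EqOn (LapA^[a] f) (LapA^[a] g) (HS n) := by
  intro a; induction a with
  | zero => exact hfg
  | succ a ih =>
    intro q hq
    rw [Function.iterate_succ_apply', Function.iterate_succ_apply']
    exact lap_congr ih hq

lemma lap_add {f g : Amb n → ℝ} (hf : SmA n f) (hg : SmA n g) {p : Amb n} (hp : p ∈ HS n) :
    LapA (fun q => f q + g q) p = LapA f p + LapA g p := by
  have ht : Set.EqOn (fun q => ptD (fun r => f r + g r) q) (fun q => ptD f q + ptD g q) (HS n) :=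
    fun q hq => dD_add (hf.diff hq) (hg.diff hq) _
  have hxs : ∀ i, Set.EqOn (fun q => pxD i (fun r => f r + g r) q)
      (fun q => pxD i f q + pxD i g q) (HS n) :=
    fun i q hq => dD_add (hf.diff hq) (hg.diff hq) _
  have h1 : ptD (fun q => ptD (fun r => f r + g r) q) p
      = ptD (fun q => ptD f q) p + ptD (fun q => ptD g q) p := by
    have s1 : fderiv ℝ (fun q => ptD (fun r => f r + g r) q) p (((1:ℝ), (0:Fin (n+1) → ℝ)))
        = fderiv ℝ (fun q => ptD f q + ptD g q) p ((1:ℝ), (0:Fin (n+1) → ℝ)) := dD_congr ht hp _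
    have s2 := dD_add (hf.dt.diff hp) (hg.dt.diff hp) (((1:ℝ), (0:Fin (n+1) → ℝ)))
    exact s1.trans s2
  have h2 : ∀ i, pxD i (fun q => pxD i (fun r => f r + g r) q) p
      = pxD i (fun q => pxD i f q) p + pxD i (fun q => pxD i g q) p := by
    intro i
    have s1 : fderiv ℝ (fun q => pxD i (fun r => f r + g r) q) p ((0:ℝ), Pi.single i 1)
        = fderiv ℝ (fun q => pxD i f q + pxD i g q) p ((0:ℝ), Pi.single i 1) :=
      dD_congr (hxs i) hp _
    have s2 := dD_add ((hf.dx i).diff hp) ((hg.dx i).diff hp) (((0:ℝ), Pi.single i 1))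
    exact s1.trans s2
  simp only [LapA]
  rw [h1, Finset.sum_congr rfl (fun i _ => h2 i), Finset.sum_add_distrib]
  ring

lemma lap_const_mul {f : Amb n → ℝ} (hf : SmA n f) (c : ℝ) {p : Amb n} (hp : p ∈ HS n) :
    LapA (fun q => c * f q) p = c * LapA f p := by
  have ht : Set.EqOn (fun q => ptD (fun r => c * f r) q) (fun q => c * ptD f q) (HS n) :=
    fun q hq => dD_const_mul (hf.diff hq) c _
  have hxs : ∀ i, Set.EqOn (fun q => pxD i (fun r => c * f r) q)
      (fun q => c * pxD i f q) (HS n) :=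
    fun i q hq => dD_const_mul (hf.diff hq) c _
  have h1 : ptD (fun q => ptD (fun r => c * f r) q) p = c * ptD (fun q => ptD f q) p := by
    have s1 : fderiv ℝ (fun q => ptD (fun r => c * f r) q) p (((1:ℝ), (0:Fin (n+1) → ℝ)))
        = fderiv ℝ (fun q => c * ptD f q) p ((1:ℝ), (0:Fin (n+1) → ℝ)) := dD_congr ht hp _
    exact s1.trans (dD_const_mul (hf.dt.diff hp) c _)
  have h2 : ∀ i, pxD i (fun q => pxD i (fun r => c * f r) q) p
      = c * pxD i (fun q => pxD i f q) p := by
    intro i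
    have s1 : fderiv ℝ (fun q => pxD i (fun r => c * f r) q) p ((0:ℝ), Pi.single i 1)
        = fderiv ℝ (fun q => c * pxD i f q) p ((0:ℝ), Pi.single i 1) := dD_congr (hxs i) hp _
    exact s1.trans (dD_const_mul ((hf.dx i).diff hp) c _)
  simp only [LapA]
  rw [h1, Finset.sum_congr rfl (fun i _ => h2 i), ← Finset.mul_sum]
  ring

lemma lap_euler {g : Amb n → ℝ} (hg : SmA n g) {p : Amb n} (hp : p ∈ HS n) :
    LapA (EulerA g) p = EulerA (LapA g) p + 2 * LapA g p := by
  have et : Set.EqOn (fun q => ptD (EulerA g) q)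
      (fun q => ptD g q + EulerA (fun r => ptD g r) q) (HS n) :=
    fun q hq => dD_euler (hg q hq) _
  have ex : ∀ i, Set.EqOn (fun q => pxD i (EulerA g) q)
      (fun q => pxD i g q + EulerA (fun r => pxD i g r) q) (HS n) :=
    fun i q hq => dD_euler (hg q hq) _
  have Ht : ptD (fun q => ptD (EulerA g) q) p
      = 2 * ptD (fun q => ptD g q) p + EulerA (fun q => ptD (fun r => ptD g r) q) p := by
    have s1 : fderiv ℝ (fun q => ptD (EulerA g) q) p (((1:ℝ), (0:Fin (n+1) → ℝ)))
        = fderiv ℝ (fun q => ptD g q + EulerA (fun r => ptD g r) q) p ((1:ℝ), (0:Fin (n+1) → ℝ)) :=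
      dD_congr et hp _
    have s2 := dD_add (hg.dt.diff hp) (hg.dt.euler.diff hp) (((1:ℝ), (0:Fin (n+1) → ℝ)))
    have s3 := dD_euler (hg.dt p hp) (((1:ℝ), (0:Fin (n+1) → ℝ)))
    show fderiv ℝ (fun q => ptD (EulerA g) q) p (((1:ℝ), (0:Fin (n+1) → ℝ)))
      = 2 * fderiv ℝ (fun q => ptD g q) p (((1:ℝ), (0:Fin (n+1) → ℝ)))
        + EulerA (fun q => fderiv ℝ (fun r => ptD g r) q (((1:ℝ), (0:Fin (n+1) → ℝ)))) p
    rw [s1, s2, s3]; ring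
  have Hx : ∀ i, pxD i (fun q => pxD i (EulerA g) q) p
      = 2 * pxD i (fun q => pxD i g q) p + EulerA (fun q => pxD i (fun r => pxD i g r) q) p := by
    intro i
    have s1 : fderiv ℝ (fun q => pxD i (EulerA g) q) p ((0:ℝ), Pi.single i 1)
        = fderiv ℝ (fun q => pxD i g q + EulerA (fun r => pxD i g r) q) p ((0:ℝ), Pi.single i 1) :=
      dD_congr (ex i) hp _
    have s2 := dD_add ((hg.dx i).diff hp) ((hg.dx i).euler.diff hp) (((0:ℝ), Pi.single i 1))
    have s3 := dD_euler ((hg.dx i) p hp) (((0:ℝ), Pi.single i 1))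
    show fderiv ℝ (fun q => pxD i (EulerA g) q) p ((0:ℝ), Pi.single i 1)
      = 2 * fderiv ℝ (fun q => pxD i g q) p ((0:ℝ), Pi.single i 1)
        + EulerA (fun q => fderiv ℝ (fun r => pxD i g r) q ((0:ℝ), Pi.single i 1)) p
    rw [s1, s2, s3]; ring
  have HE : EulerA (LapA g) p = EulerA (fun q => ptD (fun r => ptD g r) q) p
      - ∑ i, EulerA (fun q => pxD i (fun r => pxD i g r) q) p := by
    rw [euler_eq_dD]
    have h1 : fderiv ℝ (LapA g) p p
        = fderiv ℝ (fun q => ptD (fun r => ptD g r) q) p p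
          - fderiv ℝ (fun q => ∑ i, pxD i (fun r => pxD i g r) q) p p :=
      dD_sub (hg.dt.dt.diff hp)
        (by exact DifferentiableAt.fun_sum fun i _ => ((hg.dx i).dx i).diff hp) _
    have h2 : fderiv ℝ (fun q => ∑ i, pxD i (fun r => pxD i g r) q) p p
        = ∑ i, fderiv ℝ (fun q => pxD i (fun r => pxD i g r) q) p p :=
      dD_sum (fun i _ => ((hg.dx i).dx i).diff hp) _
    rw [h1, h2]
    congr 1
    · exact (euler_eq_dD _ p).symm
    · exact Finset.sum_congr rfl fun i _ => (euler_eq_dD _ p).symm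
  rw [show LapA (EulerA g) p = ptD (fun q => ptD (EulerA g) q) p
      - ∑ i, pxD i (fun q => pxD i (EulerA g) q) p from rfl]
  rw [Ht, Finset.sum_congr rfl (fun i _ => Hx i), Finset.sum_add_distrib, HE]
  rw [show LapA g p = ptD (fun q => ptD g q) p - ∑ i, pxD i (fun q => pxD i g q) p from rfl]
  rw [← Finset.mul_sum]
  ring

/-- homogeneity predicate -/
def HomA (n : ℕ) (d : ℝ) (g : Amb n → ℝ) : Prop := ∀ p ∈ HS n, EulerA g p = d * g p

lemma HomA.lap {d : ℝ} {g : Amb n → ℝ} (hg : SmA n g) (hd : HomA n d g) :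
    HomA n (d - 2) (LapA g) := by
  intro p hp
  have h1 := lap_euler hg hp
  have h2 : LapA (EulerA g) p = LapA (fun q => d * g q) p :=
    lap_congr (fun q hq => hd q hq) hp
  rw [h2, lap_const_mul hg d hp] at h1
  linear_combination -h1

lemma HomA.iterLap {d : ℝ} {g : Amb n → ℝ} (hg : SmA n g) (hd : HomA n d g) :
    ∀ a : ℕ, HomA n (d - 2*a) (LapA^[a] g) := by
  intro a; induction a with
  | zero => intro p hp; rw [show ((0:ℕ):ℝ) = 0 by norm_num]; rw [Function.iterate_zero_apply]
            rw [hd p hp]; ring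
  | succ a ih =>
    intro p hp
    have := (HomA.lap (hg.iterLap a) ih) p hp
    rw [Function.iterate_succ_apply']
    rw [this]
    push_cast; ring

lemma HomA.mul {d1 d2 : ℝ} {f g : Amb n → ℝ} (hf : SmA n f) (hg : SmA n g)
    (h1 : HomA n d1 f) (h2 : HomA n d2 g) :
    HomA n (d1 + d2) (fun q => f q * g q) := by
  intro p hp
  rw [euler_mul (hf.diff hp) (hg.diff hp), h1 p hp, h2 p hp]; ring

lemma diff_QA {p : Amb n} : DifferentiableAt ℝ (QA (n:=n)) p :=
  (contDiff_QA.differentiable (by simp)).differentiableAt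

lemma lap_Q_mul {g : Amb n → ℝ} (hg : SmA n g) {p : Amb n} (hp : p ∈ HS n) :
    LapA (fun q => QA q * g q) p
      = QA p * LapA g p - 4 * EulerA g p - 2*((n:ℝ)+2) * g p := by
  have et : Set.EqOn (fun q => ptD (fun r => QA r * g r) q)
      (fun q => QA q * ptD g q + (fun r : Amb n => -2 * r.1) q * g q) (HS n) := by
    intro q hq
    show fderiv ℝ (fun r => QA r * g r) q (((1:ℝ), (0:Fin (n+1) → ℝ)))
      = QA q * fderiv ℝ g q (((1:ℝ), (0:Fin (n+1) → ℝ))) + (-2 * q.1) * g q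
    rw [dD_mul diff_QA (hg.diff hq), dD_QA]
    simp; ring
  have ex : ∀ i, Set.EqOn (fun q => pxD i (fun r => QA r * g r) q)
      (fun q => QA q * pxD i g q + (fun r : Amb n => 2 * r.2 i) q * g q) (HS n) := by
    intro i q hq
    show fderiv ℝ (fun r => QA r * g r) q ((0:ℝ), Pi.single i 1)
      = QA q * fderiv ℝ g q ((0:ℝ), Pi.single i 1) + (2 * q.2 i) * g q
    rw [dD_mul diff_QA (hg.diff hq), dD_QA]
    simp [Pi.single_apply]
    ring
  have Ht : ptD (fun q => ptD (fun r => QA r * g r) q) p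
      = QA p * ptD (fun q => ptD g q) p - 4 * (p.1 * ptD g p) - 2 * g p := by
    have s1 : fderiv ℝ (fun q => ptD (fun r => QA r * g r) q) p (((1:ℝ), (0:Fin (n+1) → ℝ)))
        = fderiv ℝ (fun q => QA q * ptD g q + (fun r : Amb n => -2 * r.1) q * g q) p
            (((1:ℝ), (0:Fin (n+1) → ℝ))) := dD_congr et hp _
    have s2 := dD_add (diff_QA.fun_mul (hg.dt.diff hp))
      ((differentiableAt_const (-2:ℝ)).fun_mul diff_fst |>.fun_mul (hg.diff hp))
      (((1:ℝ), (0:Fin (n+1) → ℝ)))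
    have s3 := dD_mul diff_QA (hg.dt.diff hp) (((1:ℝ), (0:Fin (n+1) → ℝ)))
    have s4 := dD_mul ((differentiableAt_const (-2:ℝ)).fun_mul diff_fst) (hg.diff hp)
      (((1:ℝ), (0:Fin (n+1) → ℝ)))
    have s5 : fderiv ℝ (fun r : Amb n => -2 * r.1) p (((1:ℝ), (0:Fin (n+1) → ℝ))) = -2 := by
      rw [dD_const_mul diff_fst, dD_fst]; norm_num
    show fderiv ℝ (fun q => ptD (fun r => QA r * g r) q) p (((1:ℝ), (0:Fin (n+1) → ℝ)))
      = QA p * fderiv ℝ (fun q => ptD g q) p (((1:ℝ), (0:Fin (n+1) → ℝ)))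
        - 4 * (p.1 * fderiv ℝ g p (((1:ℝ), (0:Fin (n+1) → ℝ)))) - 2 * g p
    rw [s1, s2, s3, s4, s5, dD_QA]
    simp only [ptD, pxD]
    rw [show (ptD g) = (fun q => fderiv ℝ g q (((1:ℝ),(0:Fin (n+1) → ℝ)))) from rfl]
    simp; ring
  have Hx : ∀ i, pxD i (fun q => pxD i (fun r => QA r * g r) q) p
      = QA p * pxD i (fun q => pxD i g q) p + 4 * (p.2 i * pxD i g p) + 2 * g p := by
    intro i
    have s1 : fderiv ℝ (fun q => pxD i (fun r => QA r * g r) q) p ((0:ℝ), Pi.single i 1)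
        = fderiv ℝ (fun q => QA q * pxD i g q + (fun r : Amb n => 2 * r.2 i) q * g q) p
            ((0:ℝ), Pi.single i 1) := dD_congr (ex i) hp _
    have s2 := dD_add (diff_QA.fun_mul ((hg.dx i).diff hp))
      ((differentiableAt_const (2:ℝ)).fun_mul (diff_coord (i:=i)) |>.fun_mul (hg.diff hp))
      (((0:ℝ), Pi.single i 1))
    have s3 := dD_mul diff_QA ((hg.dx i).diff hp) (((0:ℝ), Pi.single i 1))
    have s4 := dD_mul ((differentiableAt_const (2:ℝ)).fun_mul (diff_coord (i:=i))) (hg.diff hp)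
      (((0:ℝ), Pi.single i 1))
    have s5 : fderiv ℝ (fun r : Amb n => 2 * r.2 i) p ((0:ℝ), Pi.single i 1) = 2 := by
      rw [dD_const_mul (diff_coord (i:=i)), dD_coord]; simp
    show fderiv ℝ (fun q => pxD i (fun r => QA r * g r) q) p ((0:ℝ), Pi.single i 1)
      = QA p * fderiv ℝ (fun q => pxD i g q) p ((0:ℝ), Pi.single i 1)
        + 4 * (p.2 i * fderiv ℝ g p ((0:ℝ), Pi.single i 1)) + 2 * g p
    rw [s1, s2, s3, s4, s5, dD_QA]
    simp only [ptD, pxD]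
    rw [show (pxD i g) = (fun q => fderiv ℝ g q ((0:ℝ), Pi.single i 1)) from rfl]
    simp [Pi.single_apply]
    ring
  rw [show LapA (fun q => QA q * g q) p
      = ptD (fun q => ptD (fun r => QA r * g r) q) p
        - ∑ i, pxD i (fun q => pxD i (fun r => QA r * g r) q) p from rfl]
  rw [Ht, Finset.sum_congr rfl (fun i _ => Hx i)]
  rw [Finset.sum_add_distrib, Finset.sum_add_distrib, ← Finset.mul_sum, ← Finset.mul_sum]
  rw [Finset.sum_const, Finset.card_univ, Fintype.card_fin]
  rw [show LapA g p = ptD (fun q => ptD g q) p - ∑ i, pxD i (fun q => pxD i g q) p from rfl]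
  rw [show EulerA g p = p.1 * ptD g p + ∑ i, p.2 i * pxD i g p from rfl]
  push_cast
  simp only [nsmul_eq_mul]
  push_cast
  ring

end Aux4

section Aux5
variable {n : ℕ}

noncomputable def kap (n : ℕ) (a : ℕ) (d : ℝ) : ℝ := -4 * (a:ℝ) * (d + (n:ℝ)/2 + 2 - (a:ℝ))

lemma lap_iter_add {f g : Amb n → ℝ} (hf : SmA n f) (hg : SmA n g) :
    ∀ a : ℕ, ∀ p ∈ HS n, LapA^[a] (fun q => f q + g q) p = LapA^[a] f p + LapA^[a] g p := by
  intro a; induction a with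
  | zero => intro p _; rfl
  | succ a ih =>
    intro p hp
    have e : Set.EqOn (LapA^[a] (fun q => f q + g q))
        (fun q => LapA^[a] f q + LapA^[a] g q) (HS n) := fun q hq => ih q hq
    rw [Function.iterate_succ_apply', lap_congr e hp,
      lap_add (hf.iterLap a) (hg.iterLap a) hp,
      ← congrFun (Function.iterate_succ_apply' LapA a f) p,
      ← congrFun (Function.iterate_succ_apply' LapA a g) p]

lemma lap_iter_const_mul {f : Amb n → ℝ} (hf : SmA n f) (c : ℝ) :
    ∀ a : ℕ, ∀ p ∈ HS n, LapA^[a] (fun q => c * f q) p = c * LapA^[a] f p := by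
  intro a; induction a with
  | zero => intro p _; rfl
  | succ a ih =>
    intro p hp
    have e : Set.EqOn (LapA^[a] (fun q => c * f q))
        (fun q => c * LapA^[a] f q) (HS n) := fun q hq => ih q hq
    rw [Function.iterate_succ_apply', lap_congr e hp,
      lap_const_mul (hf.iterLap a) c hp,
      ← congrFun (Function.iterate_succ_apply' LapA a f) p]

lemma lap_iter_Q_mul {g : Amb n → ℝ} {d : ℝ} (hg : SmA n g) (hd : HomA n d g) :
    ∀ a : ℕ, ∀ p ∈ HS n, LapA^[a] (fun q => QA q * g q) p
      = QA p * LapA^[a] g p + kap n a d * LapA^[a-1] g p := by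
  intro a; induction a with
  | zero => intro p _; simp [kap]
  | succ a ih =>
    intro p hp
    have e : Set.EqOn (LapA^[a] (fun q => QA q * g q))
        (fun q => QA q * LapA^[a] g q + kap n a d * LapA^[a-1] g q) (HS n) :=
      fun q hq => ih q hq
    rw [Function.iterate_succ_apply', lap_congr e hp,
      lap_add ((smA_QA).mul (hg.iterLap a)) ((hg.iterLap (a-1)).const_mul _) hp,
      lap_Q_mul (hg.iterLap a) hp,
      lap_const_mul (hg.iterLap (a-1)) _ hp,
      (HomA.iterLap hg hd a) p hp]
    have hstep : kap n a d * LapA (LapA^[a-1] g) p = kap n a d * LapA^[a] g p := by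
      cases a with
      | zero => simp [kap]
      | succ a' =>
        rw [show (a'+1) - 1 = a' from rfl, ← congrFun (Function.iterate_succ_apply' LapA a' g) p]
    rw [hstep, ← congrFun (Function.iterate_succ_apply' LapA a g) p,
      show (a+1:ℕ) - 1 = a from rfl]
    simp only [kap]
    push_cast
    ring

end Aux5



section Aux6
variable {n : ℕ}

lemma poch_succ (z : ℝ) (j : ℕ) : poch z (j+1) = poch z j * (z + j) := by
  simp [poch, ascPochhammer_succ_right]

lemma final_sum (k : ℕ) (C X Y : ℕ → ℝ) (hX0 : X 0 = 0) (hYk : Y k = 0)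
    (hcancel : ∀ a ∈ Finset.range k, C (a+1) * X (a+1) + C a * Y a = 0) :
    ∑ a ∈ Finset.range (k+1), C a * (X a + Y a) = 0 := by
  have h : ∑ a ∈ Finset.range (k+1), C a * (X a + Y a)
      = (∑ a ∈ Finset.range (k+1), C a * X a) + ∑ a ∈ Finset.range (k+1), C a * Y a := by
    rw [← Finset.sum_add_distrib]; exact Finset.sum_congr rfl fun a _ => by ring
  rw [h, Finset.sum_range_succ' (fun a => C a * X a) k,
    Finset.sum_range_succ (fun a => C a * Y a) k, hX0, hYk]
  rw [mul_zero, add_zero, mul_zero, add_zero, ← Finset.sum_add_distrib]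
  exact Finset.sum_eq_zero hcancel

lemma cancel (n k a b : ℕ) (w w' : ℝ) (hk : k = a + b + 1) (T : ℝ) :
    ((k.choose (a+1) : ℝ) * poch (((n:ℝ) - 2*(k:ℝ))/2 + w) (a+1)
      * poch (-w - w' - ((n:ℝ) - 2*(k:ℝ))/2) (k - (a+1)))
      * (kap n (a+1) (w' + ((w - 2) - 2*((k - (a+1) : ℕ):ℝ))) * T)
    + ((k.choose a : ℝ) * poch (((n:ℝ) - 2*(k:ℝ))/2 + w) a
      * poch (-w - w' - ((n:ℝ) - 2*(k:ℝ))/2) (k - a))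
      * (kap n (k - a) (w-2) * T) = 0 := by
  have h1 : k - (a+1) = b := by omega
  have h2 : k - a = b + 1 := by omega
  rw [h1, h2]
  have E : ((k.choose (a+1) : ℝ)) * ((a:ℝ)+1) = (k.choose a : ℝ) * ((b:ℝ)+1) := by
    have e := Nat.choose_succ_right_eq k a
    rw [h2] at e
    exact_mod_cast e
  have hk2 : (k:ℝ) = (a:ℝ) + (b:ℝ) + 1 := by rw [hk]; push_cast; ring
  rw [poch_succ, poch_succ, hk2]
  simp only [kap]
  push_cast
  linear_combination (4 * T * poch (((n:ℝ) - 2*((a:ℝ)+(b:ℝ)+1))/2 + w) a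
    * poch (-w - w' - ((n:ℝ) - 2*((a:ℝ)+(b:ℝ)+1))/2) b
    * ((((n:ℝ) - 2*((a:ℝ)+(b:ℝ)+1))/2 + w) + (a:ℝ))
    * ((-w - w' - ((n:ℝ) - 2*((a:ℝ)+(b:ℝ)+1))/2) + (b:ℝ))) * E

end Aux6


/-- Lemma 6.1, flat case; Case–Yan tangentiality: let `k ≥ 1`, and let
`f, h` be smooth on the half-space `{t > 0}` with `Xf = w′·f` and `Xh = (w−2)·h` there.
Then `D_{k,w,w′}[f](Q·h)` vanishes at every point of `{t > 0}` on the null cone `{Q = 0}`. -/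
theorem stmt_6 (n k : ℕ) (hn : 1 ≤ n) (hk : 1 ≤ k) (w w' : ℝ)
    (f h : Amb n → ℝ)
    (hf : ContDiffOn ℝ (⊤ : ℕ∞) f (HS n)) (hh : ContDiffOn ℝ (⊤ : ℕ∞) h (HS n))
    (hfhom : ∀ p ∈ HS n, EulerA f p = w' * f p)
    (hhhom : ∀ p ∈ HS n, EulerA h p = (w - 2) * h p)
    (p : Amb n) (hp : p ∈ HS n) (hpQ : QA p = 0) :
    CY k w w' f (fun q => QA q * h q) p = 0 := by
  have hfS : SmA n f := fun q hq => hf.contDiffAt (isOpen_HS.mem_nhds hq)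
  have hhS : SmA n h := fun q hq => hh.contDiffAt (isOpen_HS.mem_nhds hq)
  have hfH : HomA n w' f := hfhom
  have hhH : HomA n (w-2) h := hhhom
  have main : ∀ a b : ℕ,
      LapA^[a] (fun q => f q * LapA^[b] (fun q => QA q * h q) q) p
        = kap n a (w' + ((w - 2) - 2*(b:ℝ))) * LapA^[a-1] (fun q => f q * LapA^[b] h q) p
          + kap n b (w-2) * LapA^[a] (fun q => f q * LapA^[b-1] h q) p := by
    intro a b
    have gb : SmA n (fun r => f r * LapA^[b] h r) := hfS.mul (hhS.iterLap b)
    have gb' : SmA n (fun r => f r * LapA^[b-1] h r) := hfS.mul (hhS.iterLap (b-1))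
    have hgbH : HomA n (w' + ((w - 2) - 2*(b:ℝ))) (fun r => f r * LapA^[b] h r) :=
      HomA.mul hfS (hhS.iterLap b) hfH (HomA.iterLap hhS hhH b)
    have e1 : Set.EqOn (fun q => f q * LapA^[b] (fun q => QA q * h q) q)
        (fun q => QA q * (f q * LapA^[b] h q)
          + kap n b (w-2) * (f q * LapA^[b-1] h q)) (HS n) := by
      intro q hq
      simp only
      rw [lap_iter_Q_mul hhS hhH b q hq]; ring
    have t0 : LapA^[a] (fun q => f q * LapA^[b] (fun q => QA q * h q) q) p
        = LapA^[a] (fun q => QA q * (f q * LapA^[b] h q)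
            + kap n b (w-2) * (f q * LapA^[b-1] h q)) p :=
      lap_iter_congr e1 a hp
    have t1 : LapA^[a] (fun q => QA q * (f q * LapA^[b] h q)
          + kap n b (w-2) * (f q * LapA^[b-1] h q)) p
        = LapA^[a] (fun q => QA q * (f q * LapA^[b] h q)) p
          + LapA^[a] (fun q => kap n b (w-2) * (f q * LapA^[b-1] h q)) p :=
      lap_iter_add (smA_QA.mul gb) (gb'.const_mul (kap n b (w-2))) a p hp
    have t2 : LapA^[a] (fun q => QA q * (f q * LapA^[b] h q)) p
        = QA p * LapA^[a] (fun q => f q * LapA^[b] h q) p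
          + kap n a (w' + ((w - 2) - 2*(b:ℝ))) * LapA^[a-1] (fun q => f q * LapA^[b] h q) p :=
      lap_iter_Q_mul gb hgbH a p hp
    have t3 : LapA^[a] (fun q => kap n b (w-2) * (f q * LapA^[b-1] h q)) p
        = kap n b (w-2) * LapA^[a] (fun q => f q * LapA^[b-1] h q) p :=
      lap_iter_const_mul gb' (kap n b (w-2)) a p hp
    rw [t0, t1, t2, t3, hpQ]; ring
  have key : (∑ ab ∈ Finset.HasAntidiagonal.antidiagonal k,
      ((k.choose ab.1 : ℝ) * poch (((n:ℝ) - 2*(k:ℝ))/2 + w) ab.1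
        * poch (-w - w' - ((n:ℝ) - 2*(k:ℝ))/2) ab.2)
      * LapA^[ab.1] (fun q => f q * LapA^[ab.2] (fun q => QA q * h q) q) p) = 0 := by
    rw [Finset.Nat.sum_antidiagonal_eq_sum_range_succ_mk]
    calc
      ∑ a ∈ Finset.range (k+1),
          ((k.choose a : ℝ) * poch (((n:ℝ) - 2*(k:ℝ))/2 + w) a
            * poch (-w - w' - ((n:ℝ) - 2*(k:ℝ))/2) (k - a))
          * LapA^[a] (fun q => f q * LapA^[k - a] (fun q => QA q * h q) q) p
        = ∑ a ∈ Finset.range (k+1),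
            ((k.choose a : ℝ) * poch (((n:ℝ) - 2*(k:ℝ))/2 + w) a
              * poch (-w - w' - ((n:ℝ) - 2*(k:ℝ))/2) (k - a))
            * ((kap n a (w' + ((w - 2) - 2*((k - a : ℕ):ℝ)))
                 * LapA^[a-1] (fun q => f q * LapA^[k - a] h q) p)
               + (kap n (k - a) (w-2)
                 * LapA^[a] (fun q => f q * LapA^[k - a - 1] h q) p)) :=
          Finset.sum_congr rfl (fun a _ => by rw [main a (k - a)])
      _ = 0 := by
          apply final_sum k
          · simp [kap]
          · simp [kap]
          · intro a ha
            simp only [Finset.mem_range] at ha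
            exact cancel n k a (k - a - 1) w w' (by omega)
              (LapA^[a] (fun q => f q * LapA^[k - a - 1] h q) p)
  exact key
end Aux2
end

section
/- Fix integers n ≥ 1 and k ≥ 1. If f is a smooth function on ℝ × ℝ^{n+1} satisfying Xf = −((n−2k+4)/2)·f pointwise, then Δ̃^k(Q·f) = Q·Δ̃^k f identically. (Consequently Δ̃^k is tangential on homogeneous functions of degree −(n−2k)/2: changing such a function by Q times a function homogeneous of degree −(n−2k)/2 − 2 changes Δ̃^k of it only by a multiple of Q, so its restriction to the cone {Q = 0} is unchanged. This yields the GJMS operators L_{2k} on the round sphere.) -/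
namespace S8
variable {n : ℕ}

noncomputable def dd (v : Amb n) (f : Amb n → ℝ) (p : Amb n) : ℝ := fderiv ℝ f p v

def et : Amb n := ((1:ℝ), 0)
noncomputable def ex (i : Fin (n+1)) : Amb n := ((0:ℝ), Pi.single i 1)

lemma lapA_eq (f : Amb n → ℝ) (p : Amb n) :
    LapA f p = dd et (dd et f) p - ∑ i, dd (ex i) (dd (ex i) f) p := rfl

lemma ptD_eq (f : Amb n → ℝ) : ptD f = dd et f := rfl
lemma pxD_eq (i : Fin (n+1)) (f : Amb n → ℝ) : pxD i f = dd (ex i) f := rfl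

abbrev Sm (f : Amb n → ℝ) : Prop := ContDiff ℝ (⊤:ℕ∞) f

lemma Sm.diff {f : Amb n → ℝ} (hf : Sm f) (p : Amb n) : DifferentiableAt ℝ f p :=
  (hf.differentiable (by simp)).differentiableAt

lemma Sm.dd {f : Amb n → ℝ} (hf : Sm f) (v : Amb n) : Sm (dd v f) :=
  (hf.fderiv_right (by simp)).clm_apply contDiff_const

lemma dd_add {f g : Amb n → ℝ} (hf : Sm f) (hg : Sm g) (v p) :
    dd v (fun q => f q + g q) p = dd v f p + dd v g p := by
  simp only [dd, fderiv_fun_add (hf.diff p) (hg.diff p), ContinuousLinearMap.add_apply]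

lemma dd_sub {f g : Amb n → ℝ} (hf : Sm f) (hg : Sm g) (v p) :
    dd v (fun q => f q - g q) p = dd v f p - dd v g p := by
  simp only [dd, fderiv_fun_sub (hf.diff p) (hg.diff p), ContinuousLinearMap.sub_apply]

lemma dd_const_mul {f : Amb n → ℝ} (hf : Sm f) (c : ℝ) (v p) :
    dd v (fun q => c * f q) p = c * dd v f p := by
  simp only [dd, fderiv_const_mul (hf.diff p) c, ContinuousLinearMap.smul_apply, smul_eq_mul]

lemma dd_mul {f g : Amb n → ℝ} (hf : Sm f) (hg : Sm g) (v p) :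
    dd v (fun q => f q * g q) p = dd v f p * g p + f p * dd v g p := by
  simp only [dd, fderiv_fun_mul (hf.diff p) (hg.diff p), ContinuousLinearMap.add_apply,
    ContinuousLinearMap.smul_apply, smul_eq_mul]
  ring

lemma dd_sum {ι : Type*} (s : Finset ι) {F : ι → Amb n → ℝ} (hF : ∀ i ∈ s, Sm (F i)) (v p) :
    dd v (fun q => ∑ i ∈ s, F i q) p = ∑ i ∈ s, dd v (F i) p := by
  simp only [dd, fderiv_fun_sum (fun i hi => (hF i hi).diff p), ContinuousLinearMap.sum_apply]

lemma smooth_fst : Sm (fun q : Amb n => q.1) := contDiff_fst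
lemma smooth_coord (i : Fin (n+1)) : Sm (fun q : Amb n => q.2 i) :=
  (contDiff_apply ℝ ℝ i).comp contDiff_snd

lemma dd_fst (v p : Amb n) : dd v (fun q : Amb n => q.1) p = v.1 := by
  have h : (fun q : Amb n => q.1) = (ContinuousLinearMap.fst ℝ ℝ (Fin (n+1) → ℝ)) := rfl
  rw [dd, h, ContinuousLinearMap.fderiv]; rfl

lemma dd_coord (i : Fin (n+1)) (v p : Amb n) : dd v (fun q : Amb n => q.2 i) p = v.2 i := by
  have h : (fun q : Amb n => q.2 i)
      = ((ContinuousLinearMap.proj i).comp (ContinuousLinearMap.snd ℝ ℝ (Fin (n+1) → ℝ))) := rfl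
  rw [dd, h, ContinuousLinearMap.fderiv]; rfl

end S8
namespace S8
variable {n : ℕ}

lemma smooth_QA : Sm (QA (n:=n)) := by
  have : QA (n:=n) = fun p => (∑ i, (p.2 i)^2) - p.1^2 := rfl
  rw [this]
  exact (ContDiff.sum fun i _ => (smooth_coord i).pow 2).sub (smooth_fst.pow 2)

lemma QA_eq : QA (n:=n) = fun p => (∑ i, p.2 i * p.2 i) - p.1 * p.1 := by
  funext p; simp [QA, sq]

lemma dd_QA (v p : Amb n) :
    dd v (QA (n:=n)) p = (∑ i, 2 * p.2 i * v.2 i) - 2 * p.1 * v.1 := by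
  rw [QA_eq, dd_sub (ContDiff.sum fun i _ => (smooth_coord i).mul (smooth_coord i))
    (smooth_fst.mul smooth_fst),
    dd_sum _ (fun i _ => (smooth_coord i).mul (smooth_coord i)),
    dd_mul smooth_fst smooth_fst, dd_fst]
  congr 1
  · exact Finset.sum_congr rfl fun i _ => by
      rw [dd_mul (smooth_coord i) (smooth_coord i), dd_coord]; ring
  · ring

lemma dd_dd_QA (w v p : Amb n) :
    dd w (dd v (QA (n:=n))) p = (∑ i, 2 * w.2 i * v.2 i) - 2 * w.1 * v.1 := by
  have h : dd v (QA (n:=n)) = fun p => (∑ i, (2 * v.2 i) * p.2 i) - (2 * v.1) * p.1 := by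
    funext p; rw [dd_QA]; congr 1
    · exact Finset.sum_congr rfl fun i _ => by ring
    · ring
  rw [h, dd_sub (ContDiff.sum fun i _ => contDiff_const.mul (smooth_coord i))
    (contDiff_const.mul smooth_fst), dd_sum _ (fun i _ => contDiff_const.mul (smooth_coord i)),
    dd_const_mul smooth_fst, dd_fst]
  congr 1
  · exact Finset.sum_congr rfl fun i _ => by rw [dd_const_mul (smooth_coord i), dd_coord]; ring
  · ring

lemma dd_et_QA (p : Amb n) : dd et (QA (n:=n)) p = -(2 * p.1) := by
  rw [dd_QA]; simp [et]

lemma dd_ex_QA (j : Fin (n+1)) (p : Amb n) : dd (ex j) (QA (n:=n)) p = 2 * p.2 j := by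
  rw [dd_QA]
  simp [ex, Pi.single_apply, Finset.sum_ite_eq', mul_comm]

lemma dd_et_et_QA (p : Amb n) : dd et (dd et (QA (n:=n))) p = -2 := by
  rw [dd_dd_QA]; simp [et]

lemma dd_ex_ex_QA (j : Fin (n+1)) (p : Amb n) : dd (ex j) (dd (ex j) (QA (n:=n))) p = 2 := by
  rw [dd_dd_QA]
  simp [ex, Pi.single_apply, Finset.sum_ite_eq']

end S8
namespace S8
variable {n : ℕ}

noncomputable def Xop (f : Amb n → ℝ) (p : Amb n) : ℝ := fderiv ℝ f p p

lemma Xop_eq_dd (f : Amb n → ℝ) (p : Amb n) : Xop f p = dd p f p := rfl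

lemma Sm.xop {f : Amb n → ℝ} (hf : Sm f) : Sm (Xop f) :=
  (hf.fderiv_right (by simp)).clm_apply contDiff_id

lemma smooth_fderiv {f : Amb n → ℝ} (hf : Sm f) :
    ContDiff ℝ (⊤:ℕ∞) (fderiv ℝ f) := hf.fderiv_right (by simp)

lemma diff_fderiv {f : Amb n → ℝ} (hf : Sm f) (p : Amb n) :
    DifferentiableAt ℝ (fderiv ℝ f) p :=
  (smooth_fderiv hf).differentiable (by simp) p

lemma decomp (p : Amb n) :
    p = p.1 • (et (n:=n)) + ∑ i, p.2 i • ex i := by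
  refine Prod.ext ?_ ?_
  · simp [et, ex, Prod.fst_sum]
  · funext j
    simp only [et, ex, Prod.snd_add, Prod.smul_snd, Prod.snd_sum]
    simp [Finset.sum_apply, Pi.single_apply]

lemma clm_decomp (p : Amb n) (L : Amb n →L[ℝ] ℝ) :
    L p = p.1 * L et + ∑ i, p.2 i * L (ex i) := by
  conv_lhs => rw [decomp p]
  simp [smul_eq_mul]

lemma eulerA_eq_Xop {f : Amb n → ℝ} {p : Amb n} (hd : DifferentiableAt ℝ f p) :
    EulerA f p = Xop f p := by
  rw [Xop, EulerA, clm_decomp p (fderiv ℝ f p)]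
  rfl

lemma second_symm {f : Amb n → ℝ} (hf : Sm f) (p v w : Amb n) :
    fderiv ℝ (fderiv ℝ f) p v w = fderiv ℝ (fderiv ℝ f) p w v :=
  second_derivative_symmetric (f' := fderiv ℝ f)
    (fun y => (hf.differentiable (by simp) y).hasFDerivAt)
    (diff_fderiv hf p).hasFDerivAt v w

lemma dd_dd_eq_fderiv2 {f : Amb n → ℝ} (hf : Sm f) (v w p : Amb n) :
    dd w (dd v f) p = fderiv ℝ (fderiv ℝ f) p w v := by
  have h := fderiv_clm_apply (c := fderiv ℝ f) (u := fun _ => v)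
    (diff_fderiv hf p) (differentiableAt_const v)
  rw [dd, show dd v f = (fun y => (fderiv ℝ f y) ((fun _ => v) y)) from rfl, h]
  simp

lemma dd_comm {f : Amb n → ℝ} (hf : Sm f) (v w p : Amb n) :
    dd w (dd v f) p = dd v (dd w f) p := by
  rw [dd_dd_eq_fderiv2 hf, dd_dd_eq_fderiv2 hf, second_symm hf]

lemma dd_Xop {f : Amb n → ℝ} (hf : Sm f) (v p : Amb n) :
    dd v (Xop f) p = Xop (dd v f) p + dd v f p := by
  have h := fderiv_clm_apply (c := fderiv ℝ f) (u := fun y => y)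
    (diff_fderiv hf p) differentiableAt_fun_id
  rw [dd, show Xop f = (fun y => (fderiv ℝ f y) ((fun y => y) y)) from rfl, h]
  have h2 : Xop (dd v f) p = fderiv ℝ (fderiv ℝ f) p p v := by
    rw [Xop_eq_dd, dd_dd_eq_fderiv2 hf]
  rw [h2]
  simp only [ContinuousLinearMap.add_apply, ContinuousLinearMap.coe_comp', Function.comp_apply,
    ContinuousLinearMap.flip_apply, fderiv_id']
  rw [second_symm hf p v p]
  simp [dd]
  ring

end S8
namespace S8
variable {n : ℕ}

lemma smooth_lap {f : Amb n → ℝ} (hf : Sm f) : Sm (LapA f) := by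
  have h : LapA f = fun p => dd et (dd et f) p - ∑ i, dd (ex i) (dd (ex i) f) p := rfl
  rw [h]
  exact ((hf.dd et).dd et).sub (ContDiff.sum fun i _ => ((hf.dd (ex i)).dd (ex i)))

lemma dd_dd_add {f g : Amb n → ℝ} (hf : Sm f) (hg : Sm g) (v p) :
    dd v (dd v (fun q => f q + g q)) p = dd v (dd v f) p + dd v (dd v g) p := by
  rw [show dd v (fun q => f q + g q) = fun q => dd v f q + dd v g q from
      funext fun q => dd_add hf hg v q]
  exact dd_add (hf.dd v) (hg.dd v) v p

lemma dd_dd_const_mul {f : Amb n → ℝ} (hf : Sm f) (c : ℝ) (v p) :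
    dd v (dd v (fun q => c * f q)) p = c * dd v (dd v f) p := by
  rw [show dd v (fun q => c * f q) = fun q => c * dd v f q from
      funext fun q => dd_const_mul hf c v q]
  exact dd_const_mul (hf.dd v) c v p

lemma lap_add {f g : Amb n → ℝ} (hf : Sm f) (hg : Sm g) (p) :
    LapA (fun q => f q + g q) p = LapA f p + LapA g p := by
  simp only [lapA_eq]
  rw [dd_dd_add hf hg et p,
    Finset.sum_congr rfl fun i _ => dd_dd_add hf hg (ex i) p, Finset.sum_add_distrib]
  ring

lemma lap_const_mul {f : Amb n → ℝ} (hf : Sm f) (c : ℝ) (p) :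
    LapA (fun q => c * f q) p = c * LapA f p := by
  simp only [lapA_eq]
  rw [dd_dd_const_mul hf c et p,
    Finset.sum_congr rfl fun i _ => dd_dd_const_mul hf c (ex i) p, ← Finset.mul_sum]
  ring

lemma xop_lap {f : Amb n → ℝ} (hf : Sm f) (p : Amb n) :
    Xop (LapA f) p = LapA (Xop f) p - 2 * LapA f p := by
  have hv : ∀ (v q : Amb n), dd v (dd v (Xop f)) q
      = Xop (dd v (dd v f)) q + 2 * dd v (dd v f) q := by
    intro v q
    rw [show dd v (Xop f) = fun r => Xop (dd v f) r + dd v f r from funext (dd_Xop hf v),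
      dd_add ((hf.dd v).xop) (hf.dd v) v q, dd_Xop (hf.dd v) v q]
    ring
  have hlap : LapA (Xop f) p
      = (Xop (dd et (dd et f)) p + 2 * dd et (dd et f) p)
        - ∑ i, (Xop (dd (ex i) (dd (ex i) f)) p + 2 * dd (ex i) (dd (ex i) f) p) := by
    rw [lapA_eq, hv et p, Finset.sum_congr rfl fun i _ => hv (ex i) p]
  have hXlap : Xop (LapA f) p
      = Xop (dd et (dd et f)) p - ∑ i, Xop (dd (ex i) (dd (ex i) f)) p := by
    rw [Xop_eq_dd,
      show LapA f = fun q => dd et (dd et f) q - (fun r => ∑ i, dd (ex i) (dd (ex i) f) r) q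
        from rfl,
      dd_sub ((hf.dd et).dd et) (ContDiff.sum fun i _ => ((hf.dd (ex i)).dd (ex i))) p p,
      dd_sum _ (fun i _ => ((hf.dd (ex i)).dd (ex i))) p p]
    rfl
  rw [hXlap, hlap, Finset.sum_add_distrib, lapA_eq, ← Finset.mul_sum]
  ring

lemma euler_lap {f : Amb n → ℝ} (hf : Sm f) (c : ℝ) (h : ∀ p, EulerA f p = c * f p)
    (p : Amb n) : EulerA (LapA f) p = (c - 2) * LapA f p := by
  have hXf : Xop f = fun q => c * f q :=
    funext fun q => (eulerA_eq_Xop (hf.diff q)).symm.trans (h q)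
  rw [eulerA_eq_Xop ((smooth_lap hf).diff p), xop_lap hf p, hXf, lap_const_mul hf c p]
  ring

lemma dd_dd_Q_mul {f : Amb n → ℝ} (hf : Sm f) (v p) :
    dd v (dd v (fun q => QA q * f q)) p
      = dd v (dd v (QA (n:=n))) p * f p + 2 * dd v (QA (n:=n)) p * dd v f p
        + QA p * dd v (dd v f) p := by
  rw [show dd v (fun q => QA q * f q) = fun q => dd v QA q * f q + QA q * dd v f q from
      funext fun q => dd_mul smooth_QA hf v q,
    dd_add ((smooth_QA.dd v).mul hf) (smooth_QA.mul (hf.dd v)) v p,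
    dd_mul (smooth_QA.dd v) hf v p, dd_mul smooth_QA (hf.dd v) v p]
  ring

lemma lap_Q_mul {f : Amb n → ℝ} (hf : Sm f) (p : Amb n) :
    LapA (fun q => QA q * f q) p
      = QA p * LapA f p - 4 * EulerA f p - (2*(n:ℝ)+4) * f p := by
  simp only [lapA_eq]
  rw [dd_dd_Q_mul hf et p, Finset.sum_congr rfl fun i _ => dd_dd_Q_mul hf (ex i) p,
    dd_et_et_QA, dd_et_QA,
    Finset.sum_congr rfl fun i _ => by rw [dd_ex_ex_QA, dd_ex_QA]]
  have e1 : ∑ i, ((2:ℝ) * f p + 2 * (2 * p.2 i) * dd (ex i) f p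
        + QA p * dd (ex i) (dd (ex i) f) p)
      = (2*(n:ℝ)+2) * f p + 4 * (∑ i, p.2 i * dd (ex i) f p)
        + QA p * (∑ i, dd (ex i) (dd (ex i) f) p) := by
    rw [Finset.sum_add_distrib, Finset.sum_add_distrib, Finset.sum_const, Finset.card_univ,
      Fintype.card_fin, nsmul_eq_mul, Finset.mul_sum, Finset.mul_sum]
    push_cast
    rw [Finset.sum_congr rfl fun (i : Fin (n+1)) _ =>
      (show (2:ℝ) * (2 * p.2 i) * dd (ex i) f p = 4 * (p.2 i * dd (ex i) f p) by ring)]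
    try ring
  rw [e1]
  have e2 : EulerA f p = p.1 * dd et f p + ∑ i, p.2 i * dd (ex i) f p := by
    rfl
  rw [e2]
  ring

end S8


open S8 in
/-- Example 3.1, tangentiality of `Δ̃^k`: if `f` is smooth on
`ℝ × ℝ^{n+1}` with `Xf = −((n−2k+4)/2)·f` pointwise, then `Δ̃^k(Q·f) = Q·Δ̃^k f`
identically. -/
theorem stmt_8 (n k : ℕ) (hn : 1 ≤ n) (hk : 1 ≤ k)
    (f : Amb n → ℝ) (hf : ContDiff ℝ (⊤ : ℕ∞) f)
    (hhom : ∀ p : Amb n, EulerA f p = -(((n:ℝ) - 2*(k:ℝ) + 4)/2) * f p) (p : Amb n) :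
    LapA^[k] (fun q => QA q * f q) p = QA p * LapA^[k] f p := by
  set c : ℝ := -(((n:ℝ) - 2*(k:ℝ) + 4)/2) with hc
  have smooth_iter : ∀ m, Sm (LapA^[m] f) := by
    intro m
    induction m with
    | zero => exact hf
    | succ m ih => rw [Function.iterate_succ_apply']; exact smooth_lap ih
  have euler_iter : ∀ m (q : Amb n),
      EulerA (LapA^[m] f) q = (c - 2*(m:ℝ)) * LapA^[m] f q := by
    intro m
    induction m with
    | zero => intro q; simpa using hhom q
    | succ m ih =>
      intro q
      rw [Function.iterate_succ_apply']
      have := euler_lap (smooth_iter m) (c - 2*(m:ℝ)) ih q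
      rw [this]
      push_cast
      ring
  have main : ∀ m (q : Amb n),
      LapA^[m+1] (fun r => QA r * f r) q
        = QA q * LapA^[m+1] f q
          + (4*((m:ℝ)+1)*(((m:ℝ)+1) - (k:ℝ))) * LapA^[m] f q := by
    intro m
    induction m with
    | zero =>
      intro q
      simp only [zero_add, Function.iterate_one, Function.iterate_zero, id_eq]
      rw [lap_Q_mul hf q, hhom q, hc]
      push_cast
      ring
    | succ m ih =>
      intro q
      have hfun : LapA^[m+1] (fun r => QA r * f r)
          = fun r => QA r * LapA^[m+1] f r
            + (4*((m:ℝ)+1)*(((m:ℝ)+1) - (k:ℝ))) * LapA^[m] f r := funext ih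
      rw [Function.iterate_succ_apply' LapA (m+1), hfun]
      have h1 : LapA (fun r => QA r * LapA^[m+1] f r
            + (4*((m:ℝ)+1)*(((m:ℝ)+1) - (k:ℝ))) * LapA^[m] f r) q
          = LapA (fun r => QA r * LapA^[m+1] f r) q
            + (4*((m:ℝ)+1)*(((m:ℝ)+1) - (k:ℝ))) * LapA (LapA^[m] f) q := by
        rw [lap_add (smooth_QA.mul (smooth_iter (m+1)))
          (contDiff_const.mul (smooth_iter m)) q,
          lap_const_mul (smooth_iter m) _ q]
      rw [h1, lap_Q_mul (smooth_iter (m+1)) q, euler_iter (m+1) q,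
        ← Function.iterate_succ_apply' LapA m f, ← Function.iterate_succ_apply' LapA (m+1) f]
      push_cast
      rw [hc]
      ring
  obtain ⟨m, rfl⟩ : ∃ m, k = m + 1 := ⟨k - 1, (Nat.succ_pred_eq_of_pos hk).symm⟩
  have := main m p
  rw [this]
  push_cast
  ring
end

section
/- Fix integers n ≥ 1 and k ≥ 1. Let f be a smooth function on the half-space {(t,x) : t > 0} ⊂ ℝ × ℝ^{n+1} satisfying Xf = −((n−2k+2)/2)·f pointwise. Then at every point p with t(p) = 1 and |x(p)| = 1 one has: Σ_{i=0}^n x^i(p)·( t·Δ̃^k(x^i·f) − x^i·Δ̃^k(t·f) )(p) = k(n+2k−2)·(Δ̃^{k−1} f)(p). -/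
open scoped ContDiff

namespace Stmt9

variable {n : ℕ}

/-- Directional derivative along a constant vector. -/
noncomputable def DD (v : Amb n) (f : Amb n → ℝ) (p : Amb n) : ℝ := fderiv ℝ f p v

/-- Smooth on the half space. -/
def Sm (f : Amb n → ℝ) : Prop := ContDiffOn ℝ (⊤:ℕ∞) f (HS n)

def et : Amb n := (1, 0)
def ex (i : Fin (n+1)) : Amb n := (0, Pi.single i 1)

lemma LapA_eq (f : Amb n → ℝ) (p : Amb n) :
    LapA f p = DD et (DD et f) p - ∑ i, DD (ex i) (DD (ex i) f) p := rfl

lemma EulerA_eq (f : Amb n → ℝ) (p : Amb n) :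
    EulerA f p = p.1 * DD et f p + ∑ i, p.2 i * DD (ex i) f p := rfl

lemma isOpen_HS : IsOpen (HS n) := isOpen_lt continuous_const continuous_fst

lemma Sm.diffAt {f : Amb n → ℝ} (hf : Sm f) {p} (hp : p ∈ HS n) :
    DifferentiableAt ℝ f p :=
  (hf.differentiableOn (by simp)).differentiableAt (isOpen_HS.mem_nhds hp)

lemma Sm.dd {f : Amb n → ℝ} (hf : Sm f) (v : Amb n) : Sm (DD v f) :=
  (hf.fderiv_of_isOpen isOpen_HS le_rfl).clm_apply contDiffOn_const

lemma Sm.const (c : ℝ) : Sm (fun _ : Amb n => c) := contDiffOn_const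

lemma Sm.add {f g : Amb n → ℝ} (hf : Sm f) (hg : Sm g) : Sm (fun q => f q + g q) :=
  ContDiffOn.add hf hg

lemma Sm.sub {f g : Amb n → ℝ} (hf : Sm f) (hg : Sm g) : Sm (fun q => f q - g q) :=
  ContDiffOn.sub hf hg

lemma Sm.cmul {f : Amb n → ℝ} (hf : Sm f) (c : ℝ) : Sm (fun q => c * f q) :=
  ContDiffOn.mul contDiffOn_const hf

lemma Sm.sum {ι : Type*} {s : Finset ι} {F : ι → Amb n → ℝ} (hF : ∀ i ∈ s, Sm (F i)) :
    Sm (fun q => ∑ i ∈ s, F i q) :=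
  ContDiffOn.sum hF

lemma Sm.clm_mul (ℓ : Amb n →L[ℝ] ℝ) {f : Amb n → ℝ} (hf : Sm f) :
    Sm (fun q => ℓ q * f q) :=
  ContDiffOn.mul (ℓ.contDiff.contDiffOn) hf

lemma Sm.Lap {f : Amb n → ℝ} (hf : Sm f) : Sm (LapA f) := by
  have : LapA f = fun p => DD et (DD et f) p - ∑ i, DD (ex i) (DD (ex i) f) p := rfl
  rw [this]
  exact Sm.sub ((hf.dd et).dd et) (Sm.sum (fun i _ => ((hf.dd (ex i)).dd (ex i))))

lemma Sm.LapIter {f : Amb n → ℝ} (hf : Sm f) (m : ℕ) : Sm (LapA^[m] f) := by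
  induction m generalizing f with
  | zero => exact hf
  | succ m ih => rw [Function.iterate_succ_apply]; exact ih hf.Lap

/-! ### Pointwise calculus for `DD` -/

lemma DD_congr {f g : Amb n → ℝ} (h : Set.EqOn f g (HS n)) {p} (hp : p ∈ HS n) (v : Amb n) :
    DD v f p = DD v g p := by
  have : f =ᶠ[nhds p] g := by filter_upwards [isOpen_HS.mem_nhds hp] using h
  simp only [DD, this.fderiv_eq]

lemma DD_add {f g : Amb n → ℝ} {p} (hf : DifferentiableAt ℝ f p)
    (hg : DifferentiableAt ℝ g p) (v : Amb n) :
    DD v (fun q => f q + g q) p = DD v f p + DD v g p := by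
  simp [DD, fderiv_fun_add hf hg]

lemma DD_sub {f g : Amb n → ℝ} {p} (hf : DifferentiableAt ℝ f p)
    (hg : DifferentiableAt ℝ g p) (v : Amb n) :
    DD v (fun q => f q - g q) p = DD v f p - DD v g p := by
  simp [DD, fderiv_fun_sub hf hg]

lemma DD_const_mul {f : Amb n → ℝ} {p} (hf : DifferentiableAt ℝ f p) (c : ℝ) (v : Amb n) :
    DD v (fun q => c * f q) p = c * DD v f p := by
  simp [DD, fderiv_const_mul hf c]

lemma DD_const (c : ℝ) (p v : Amb n) : DD v (fun _ => c) p = 0 := by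
  simp [DD]

lemma DD_sum {ι : Type*} {s : Finset ι} {F : ι → Amb n → ℝ} {p}
    (hF : ∀ i ∈ s, DifferentiableAt ℝ (F i) p) (v : Amb n) :
    DD v (fun q => ∑ i ∈ s, F i q) p = ∑ i ∈ s, DD v (F i) p := by
  simp [DD, fderiv_fun_sum hF]

lemma DD_mul {f g : Amb n → ℝ} {p} (hf : DifferentiableAt ℝ f p)
    (hg : DifferentiableAt ℝ g p) (v : Amb n) :
    DD v (fun q => f q * g q) p = DD v f p * g p + f p * DD v g p := by
  simp [DD, fderiv_fun_mul hf hg]; ring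

lemma DD_clm (ℓ : Amb n →L[ℝ] ℝ) (p v : Amb n) : DD v (fun q => ℓ q) p = ℓ v := by
  simp only [DD]
  rw [show (fun q : Amb n => ℓ q) = ⇑ℓ from rfl, ℓ.fderiv]

lemma DD_comm {f : Amb n → ℝ} (hf : Sm f) {p} (hp : p ∈ HS n)
    (v w : Amb n) : DD v (DD w f) p = DD w (DD v f) p := by
  have hK : ContDiffAt ℝ (⊤:ℕ∞) f p := hf.contDiffAt (isOpen_HS.mem_nhds hp)
  have hsym := hK.isSymmSndFDerivAt (by rw [minSmoothness_of_isRCLikeNormedField]; exact WithTop.coe_le_coe.2 le_top)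
  have hd : DifferentiableAt ℝ (fderiv ℝ f) p :=
    ((hf.fderiv_of_isOpen (m := ∞) isOpen_HS le_rfl).differentiableOn
      (by simp)).differentiableAt (isOpen_HS.mem_nhds hp)
  have key : ∀ a b : Amb n, DD a (DD b f) p = fderiv ℝ (fderiv ℝ f) p a b := by
    intro a b
    have h2 := fderiv_clm_apply (c := fderiv ℝ f) (u := fun _ => b) hd
      (differentiableAt_const b)
    show fderiv ℝ (fun q => (fderiv ℝ f q) b) p a = _
    rw [h2]; simp
  rw [key, key, hsym v w]


/-! ### Pointwise calculus for `LapA` -/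

lemma Lap_congr {f g : Amb n → ℝ} (h : Set.EqOn f g (HS n)) :
    Set.EqOn (LapA f) (LapA g) (HS n) := by
  intro p hp
  have h1 : ∀ v, Set.EqOn (DD v f) (DD v g) (HS n) := fun v q hq => DD_congr h hq v
  rw [LapA_eq, LapA_eq, DD_congr (h1 et) hp et]
  congr 1
  exact Finset.sum_congr rfl fun i _ => DD_congr (h1 (ex i)) hp (ex i)

lemma LapIter_congr {f g : Amb n → ℝ} (h : Set.EqOn f g (HS n)) (m : ℕ) :
    Set.EqOn (LapA^[m] f) (LapA^[m] g) (HS n) := by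
  induction m generalizing f g with
  | zero => exact h
  | succ m ih => rw [Function.iterate_succ_apply, Function.iterate_succ_apply]
                 exact ih (Lap_congr h)

lemma Lap_add {f g : Amb n → ℝ} (hf : Sm f) (hg : Sm g) {p} (hp : p ∈ HS n) :
    LapA (fun q => f q + g q) p = LapA f p + LapA g p := by
  have h1 : ∀ v, Set.EqOn (DD v (fun q => f q + g q)) (fun q => DD v f q + DD v g q) (HS n) :=
    fun v q hq => DD_add (hf.diffAt hq) (hg.diffAt hq) v
  have h2 : ∀ v w, DD w (DD v (fun q => f q + g q)) p
      = DD w (DD v f) p + DD w (DD v g) p := by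
    intro v w
    rw [DD_congr (h1 v) hp w, DD_add (((hf.dd v)).diffAt hp) ((hg.dd v).diffAt hp) w]
  rw [LapA_eq, LapA_eq, LapA_eq, h2 et et]
  rw [Finset.sum_congr rfl fun i _ => h2 (ex i) (ex i)]
  rw [Finset.sum_add_distrib]; ring

lemma Lap_cmul {f : Amb n → ℝ} (hf : Sm f) (c : ℝ) {p} (hp : p ∈ HS n) :
    LapA (fun q => c * f q) p = c * LapA f p := by
  have h1 : ∀ v, Set.EqOn (DD v (fun q => c * f q)) (fun q => c * DD v f q) (HS n) :=
    fun v q hq => DD_const_mul (hf.diffAt hq) c v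
  have h2 : ∀ v w, DD w (DD v (fun q => c * f q)) p = c * DD w (DD v f) p := by
    intro v w
    rw [DD_congr (h1 v) hp w, DD_const_mul ((hf.dd v).diffAt hp) c w]
  rw [LapA_eq, LapA_eq, h2 et et, Finset.sum_congr rfl fun i _ => h2 (ex i) (ex i),
    ← Finset.mul_sum]
  ring

lemma Lap_sub {f g : Amb n → ℝ} (hf : Sm f) (hg : Sm g) {p} (hp : p ∈ HS n) :
    LapA (fun q => f q - g q) p = LapA f p - LapA g p := by
  have e : (fun q => f q - g q) = fun q => f q + (-1 : ℝ) * g q := by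
    funext q; ring
  rw [e, Lap_add hf (hg.cmul (-1)) hp, Lap_cmul hg (-1) hp]; ring

lemma Lap_sum {ι : Type*} {s : Finset ι} {F : ι → Amb n → ℝ}
    (hF : ∀ i ∈ s, Sm (F i)) {p} (hp : p ∈ HS n) :
    LapA (fun q => ∑ i ∈ s, F i q) p = ∑ i ∈ s, LapA (F i) p := by
  classical
  induction s using Finset.induction with
  | empty =>
      simp only [Finset.sum_empty]
      rw [LapA_eq]
      have h0 : ∀ v w : Amb n, DD w (DD v (fun _ : Amb n => (0:ℝ))) p = 0 := by
        intro v w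
        have : Set.EqOn (DD v (fun _ : Amb n => (0:ℝ))) (fun _ => (0:ℝ)) (HS n) :=
          fun q _ => DD_const 0 q v
        rw [DD_congr this hp w, DD_const]
      rw [h0 et et, Finset.sum_congr rfl fun i _ => h0 (ex i) (ex i)]
      simp
  | @insert a s' hx ih =>
      have e : (fun q => ∑ i ∈ insert a s', F i q)
          = fun q => F a q + ∑ i ∈ s', F i q := by
        funext q; rw [Finset.sum_insert hx]
      rw [e, Lap_add (hF a (Finset.mem_insert_self a s'))
        (Sm.sum fun i hi => hF i (Finset.mem_insert_of_mem hi)) hp,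
        ih (fun i hi => hF i (Finset.mem_insert_of_mem hi)), Finset.sum_insert hx]


/-! ### Commutation of `LapA` with `DD`, and iterate linearity -/

lemma Lap_DD {f : Amb n → ℝ} (hf : Sm f) (u : Amb n) {p} (hp : p ∈ HS n) :
    LapA (DD u f) p = DD u (LapA f) p := by
  -- each second-derivative term commutes with DD u
  have h2 : ∀ v, DD v (DD v (DD u f)) p = DD u (DD v (DD v f)) p := by
    intro v
    have e1 : Set.EqOn (DD v (DD u f)) (DD u (DD v f)) (HS n) :=
      fun q hq => DD_comm hf hq v u
    rw [DD_congr e1 hp v, DD_comm (hf.dd v) hp v u]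
  have hL : Set.EqOn (LapA f)
      (fun q => DD et (DD et f) q - ∑ i, DD (ex i) (DD (ex i) f) q) (HS n) :=
    fun q _ => rfl
  rw [LapA_eq, h2 et, Finset.sum_congr rfl fun i _ => h2 (ex i),
    DD_congr hL hp u,
    DD_sub (((hf.dd et).dd et).diffAt hp)
      ((Sm.sum fun i _ => (hf.dd (ex i)).dd (ex i)).diffAt hp) u,
    DD_sum (fun i _ => ((hf.dd (ex i)).dd (ex i)).diffAt hp) u]

lemma LapIter_DD {f : Amb n → ℝ} (hf : Sm f) (u : Amb n) (m : ℕ) {p} (hp : p ∈ HS n) :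
    LapA^[m] (DD u f) p = DD u (LapA^[m] f) p := by
  induction m generalizing f with
  | zero => rfl
  | succ m ih =>
      rw [Function.iterate_succ_apply, Function.iterate_succ_apply]
      have e : Set.EqOn (LapA (DD u f)) (DD u (LapA f)) (HS n) :=
        fun q hq => Lap_DD hf u hq
      rw [LapIter_congr e m hp]
      exact ih hf.Lap

lemma LapIter_add {f g : Amb n → ℝ} (hf : Sm f) (hg : Sm g) (m : ℕ) {p} (hp : p ∈ HS n) :
    LapA^[m] (fun q => f q + g q) p = LapA^[m] f p + LapA^[m] g p := by
  induction m generalizing f g with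
  | zero => rfl
  | succ m ih =>
      rw [Function.iterate_succ_apply, Function.iterate_succ_apply,
        Function.iterate_succ_apply (f := LapA) (n := m) (x := g)]
      have e : Set.EqOn (LapA (fun q => f q + g q)) (fun q => LapA f q + LapA g q) (HS n) :=
        fun q hq => Lap_add hf hg hq
      rw [LapIter_congr e m hp]
      exact ih hf.Lap hg.Lap

lemma LapIter_cmul {f : Amb n → ℝ} (hf : Sm f) (c : ℝ) (m : ℕ) {p} (hp : p ∈ HS n) :
    LapA^[m] (fun q => c * f q) p = c * LapA^[m] f p := by
  induction m generalizing f with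
  | zero => rfl
  | succ m ih =>
      rw [Function.iterate_succ_apply, Function.iterate_succ_apply]
      have e : Set.EqOn (LapA (fun q => c * f q)) (fun q => c * LapA f q) (HS n) :=
        fun q hq => Lap_cmul hf c hq
      rw [LapIter_congr e m hp]
      exact ih hf.Lap

lemma LapIter_sub {f g : Amb n → ℝ} (hf : Sm f) (hg : Sm g) (m : ℕ) {p} (hp : p ∈ HS n) :
    LapA^[m] (fun q => f q - g q) p = LapA^[m] f p - LapA^[m] g p := by
  have e : (fun q => f q - g q) = fun q => f q + (-1:ℝ) * g q := by funext q; ring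
  rw [e, LapIter_add hf (hg.cmul (-1)) m hp, LapIter_cmul hg (-1) m hp]; ring

lemma LapIter_sum {ι : Type*} {s : Finset ι} {F : ι → Amb n → ℝ}
    (hF : ∀ i ∈ s, Sm (F i)) (m : ℕ) {p} (hp : p ∈ HS n) :
    LapA^[m] (fun q => ∑ i ∈ s, F i q) p = ∑ i ∈ s, LapA^[m] (F i) p := by
  classical
  induction s using Finset.induction with
  | empty =>
      simp only [Finset.sum_empty]
      induction m generalizing p with
      | zero => rfl
      | succ m ihm =>
          rw [Function.iterate_succ_apply]
          have e : Set.EqOn (LapA (fun _ : Amb n => (0:ℝ))) (fun _ => (0:ℝ)) (HS n) := by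
            intro q hq
            have := Lap_cmul (Sm.const 0) 0 hq
            simpa using this
          rw [LapIter_congr e m hp]
          exact ihm hp
  | @insert a s' hx ih =>
      have e : (fun q => ∑ i ∈ insert a s', F i q) = fun q => F a q + ∑ i ∈ s', F i q := by
        funext q; rw [Finset.sum_insert hx]
      rw [e, LapIter_add (hF a (Finset.mem_insert_self a s'))
        (Sm.sum fun i hi => hF i (Finset.mem_insert_of_mem hi)) m hp,
        ih (fun i hi => hF i (Finset.mem_insert_of_mem hi)), Finset.sum_insert hx]


/-! ### Multiplication by a linear coordinate -/

/-- The first-order operator appearing in `[Δ̃, ℓ·]`. -/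
noncomputable def BB (ℓ : Amb n →L[ℝ] ℝ) (f : Amb n → ℝ) (p : Amb n) : ℝ :=
  2 * ℓ et * DD et f p - ∑ i, 2 * ℓ (ex i) * DD (ex i) f p

lemma Sm.BB (ℓ : Amb n →L[ℝ] ℝ) {f : Amb n → ℝ} (hf : Sm f) : Sm (Stmt9.BB ℓ f) :=
  Sm.sub ((hf.dd et).cmul _) (Sm.sum fun i _ => (hf.dd (ex i)).cmul _)

lemma Lap_clm_mul (ℓ : Amb n →L[ℝ] ℝ) {f : Amb n → ℝ} (hf : Sm f) {p} (hp : p ∈ HS n) :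
    LapA (fun q => ℓ q * f q) p = ℓ p * LapA f p + BB ℓ f p := by
  have h1 : ∀ v, Set.EqOn (DD v (fun q => ℓ q * f q))
      (fun q => ℓ v * f q + ℓ q * DD v f q) (HS n) := by
    intro v q hq
    rw [DD_mul (ℓ.differentiableAt) (hf.diffAt hq) v, DD_clm]
  have h2 : ∀ v, DD v (DD v (fun q => ℓ q * f q)) p
      = 2 * ℓ v * DD v f p + ℓ p * DD v (DD v f) p := by
    intro v
    rw [DD_congr (h1 v) hp v,
      DD_add (g := fun q => ℓ q * DD v f q) ((hf.diffAt hp).const_mul _) (ℓ.differentiableAt.mul ((hf.dd v).diffAt hp)) v,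
      DD_const_mul (hf.diffAt hp) (ℓ v) v,
      DD_mul ℓ.differentiableAt ((hf.dd v).diffAt hp) v, DD_clm]
    ring
  rw [LapA_eq, LapA_eq, h2 et, Finset.sum_congr rfl fun i _ => h2 (ex i),
    Finset.sum_add_distrib, ← Finset.mul_sum, BB]
  ring

lemma LapIter_BB (ℓ : Amb n →L[ℝ] ℝ) {f : Amb n → ℝ} (hf : Sm f) (m : ℕ)
    {p} (hp : p ∈ HS n) :
    LapA^[m] (BB ℓ f) p = BB ℓ (LapA^[m] f) p := by
  have e : Stmt9.BB ℓ f
      = fun q => (2 * ℓ et) * DD et f q - ∑ i, (2 * ℓ (ex i)) * DD (ex i) f q := rfl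
  rw [e, LapIter_sub ((hf.dd et).cmul _) (Sm.sum fun i _ => (hf.dd (ex i)).cmul _) m hp,
    LapIter_cmul (hf.dd et) _ m hp,
    LapIter_sum (fun i _ => (hf.dd (ex i)).cmul _) m hp,
    Finset.sum_congr rfl fun i _ => LapIter_cmul (hf.dd (ex i)) _ m hp,
    LapIter_DD hf et m hp,
    Finset.sum_congr rfl fun i _ => by rw [LapIter_DD hf (ex i) m hp]]
  rfl

lemma LapIter_clm_mul (ℓ : Amb n →L[ℝ] ℝ) (m : ℕ) {f : Amb n → ℝ} (hf : Sm f)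
    {p} (hp : p ∈ HS n) :
    LapA^[m+1] (fun q => ℓ q * f q) p
      = ℓ p * LapA^[m+1] f p + ((m:ℝ)+1) * BB ℓ (LapA^[m] f) p := by
  induction m generalizing f with
  | zero =>
      simp only [zero_add, Function.iterate_one, Function.iterate_zero, id_eq, Nat.cast_zero]
      rw [Lap_clm_mul ℓ hf hp]; ring
  | succ m ih =>
      rw [Function.iterate_succ_apply]
      have e : Set.EqOn (LapA (fun q => ℓ q * f q))
          (fun q => (fun r => ℓ r * LapA f r) q + BB ℓ f q) (HS n) :=
        fun q hq => Lap_clm_mul ℓ hf hq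
      rw [LapIter_congr e (m+1) hp,
        LapIter_add (Sm.clm_mul ℓ hf.Lap) (Sm.BB ℓ hf) (m+1) hp,
        ih hf.Lap, LapIter_BB ℓ hf (m+1) hp,
        ← Function.iterate_succ_apply, ← Function.iterate_succ_apply]
      push_cast; ring

/-! ### The coordinate linear functionals -/

noncomputable def ct : Amb n →L[ℝ] ℝ := ContinuousLinearMap.fst ℝ ℝ (Fin (n+1) → ℝ)
noncomputable def cx (i : Fin (n+1)) : Amb n →L[ℝ] ℝ :=
  (ContinuousLinearMap.proj i).comp (ContinuousLinearMap.snd ℝ ℝ (Fin (n+1) → ℝ))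

lemma BB_ct (g : Amb n → ℝ) (p : Amb n) : BB ct g p = 2 * DD et g p := by
  have h1 : ct (et : Amb n) = 1 := rfl
  have h2 : ∀ i, ct (ex i : Amb n) = 0 := fun i => rfl
  simp [BB, h1, h2]

lemma BB_cx (i : Fin (n+1)) (g : Amb n → ℝ) (p : Amb n) :
    BB (cx i) g p = -(2 * DD (ex i) g p) := by
  have h1 : cx i (et : Amb n) = 0 := rfl
  have h2 : ∀ j, cx i (ex j : Amb n) = if i = j then 1 else 0 := by
    intro j
    have e0 : cx i (ex j : Amb n) = (Pi.single j (1:ℝ) : Fin (n+1) → ℝ) i := rfl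
    rw [e0, Pi.single_apply]
  simp [BB, h1, h2, mul_ite, ite_mul, Finset.sum_ite_eq]

/-! ### Euler operator -/

lemma Lap_Euler {f : Amb n → ℝ} (hf : Sm f) {p} (hp : p ∈ HS n) :
    LapA (EulerA f) p = EulerA (LapA f) p + 2 * LapA f p := by
  have e : EulerA f = fun q => ct q * DD et f q + ∑ i, cx i q * DD (ex i) f q := rfl
  rw [e, Lap_add (Sm.clm_mul ct (hf.dd et))
      (Sm.sum fun i _ => Sm.clm_mul (cx i) (hf.dd (ex i))) hp,
    Lap_clm_mul ct (hf.dd et) hp,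
    Lap_sum (fun i _ => Sm.clm_mul (cx i) (hf.dd (ex i))) hp,
    Finset.sum_congr rfl fun i _ => Lap_clm_mul (cx i) (hf.dd (ex i)) hp,
    BB_ct, Finset.sum_congr rfl fun i _ => by rw [BB_cx i (DD (ex i) f) p],
    Lap_DD hf et hp,
    Finset.sum_congr rfl fun i _ => by rw [Lap_DD hf (ex i) hp]]
  rw [EulerA_eq, LapA_eq f, Finset.sum_add_distrib, Finset.sum_neg_distrib]
  have hct : ct p = p.1 := rfl
  have hcx : ∀ i, cx i p = p.2 i := fun i => rfl
  simp only [hct, hcx]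
  rw [← Finset.mul_sum]
  ring

lemma Euler_step {g : Amb n → ℝ} (hg : Sm g) (c : ℝ)
    (h : ∀ q ∈ HS n, EulerA g q = c * g q) :
    ∀ p ∈ HS n, EulerA (LapA g) p = (c - 2) * LapA g p := by
  intro p hp
  have e : Set.EqOn (EulerA g) (fun q => c * g q) (HS n) := h
  have h1 : LapA (EulerA g) p = c * LapA g p := by
    rw [Lap_congr e hp, Lap_cmul hg c hp]
  have h2 := Lap_Euler hg hp
  have := h1.symm.trans h2
  linarith [this]

lemma Euler_iter {f : Amb n → ℝ} (hf : Sm f) (c : ℝ)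
    (h : ∀ q ∈ HS n, EulerA f q = c * f q) (m : ℕ) :
    ∀ p ∈ HS n, EulerA (LapA^[m] f) p = (c - 2*m) * LapA^[m] f p := by
  induction m with
  | zero => intro p hp; simpa using h p hp
  | succ m ih =>
      intro p hp
      rw [Function.iterate_succ_apply']
      have := Euler_step (hf.LapIter m) (c - 2*m) ih p hp
      rw [this]; push_cast; ring


end Stmt9

/-- Example 6.1: `Σᵢ xⁱ[L_{2k}, xⁱ] = k(n+2k−2)·L_{2k−2}` on the round
sphere, via the flat ambient space: if `f` is smooth on the half-space `{t > 0}` with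
`Xf = −((n−2k+2)/2)·f` there, then at every point `p` with `t(p) = 1` and `|x(p)| = 1`,
`Σᵢ xⁱ(t·Δ̃^k(xⁱ·f) − xⁱ·Δ̃^k(t·f)) = k(n+2k−2)·Δ̃^{k−1}f` at `p`. -/
theorem stmt_9 (n k : ℕ) (hn : 1 ≤ n) (hk : 1 ≤ k)
    (f : Amb n → ℝ) (hf : ContDiffOn ℝ (⊤ : ℕ∞) f (HS n))
    (hhom : ∀ p ∈ HS n, EulerA f p = -(((n:ℝ) - 2*(k:ℝ) + 2)/2) * f p)
    (p : Amb n) (hpt : p.1 = 1) (hpx : ∑ i, (p.2 i)^2 = 1) :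
    ∑ i, p.2 i * (p.1 * LapA^[k] (fun q => q.2 i * f q) p
        - p.2 i * LapA^[k] (fun q => q.1 * f q) p)
      = (k:ℝ) * ((n:ℝ) + 2*(k:ℝ) - 2) * LapA^[k-1] f p := by
  open Stmt9 in
  obtain ⟨m, rfl⟩ : ∃ m, k = m + 1 := ⟨k - 1, (Nat.succ_pred_eq_of_pos hk).symm⟩
  have hp : p ∈ HS n := by
    simp only [HS, Set.mem_setOf_eq, hpt]; norm_num
  have hfS : Stmt9.Sm f := hf
  simp only [Nat.add_sub_cancel]
  set g := LapA^[m] f with hg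
  have heu := Stmt9.Euler_iter hfS _ hhom m p hp
  rw [Stmt9.EulerA_eq, hpt] at heu
  have hxi : ∀ i : Fin (n+1), LapA^[m+1] (fun q => q.2 i * f q) p
      = p.2 i * LapA^[m+1] f p + ((m:ℝ)+1) * (-(2 * Stmt9.DD (Stmt9.ex i) g p)) := by
    intro i
    have h := Stmt9.LapIter_clm_mul (Stmt9.cx i) m hfS hp
    rw [Stmt9.BB_cx] at h
    exact h
  have hti : LapA^[m+1] (fun q => q.1 * f q) p
      = p.1 * LapA^[m+1] f p + ((m:ℝ)+1) * (2 * Stmt9.DD Stmt9.et g p) := by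
    have h := Stmt9.LapIter_clm_mul Stmt9.ct m hfS hp
    rw [Stmt9.BB_ct] at h
    exact h
  have hterm : ∀ i : Fin (n+1),
      p.2 i * (p.1 * LapA^[m+1] (fun q => q.2 i * f q) p
        - p.2 i * LapA^[m+1] (fun q => q.1 * f q) p)
      = (-(2*((m:ℝ)+1))) * (p.2 i * Stmt9.DD (Stmt9.ex i) g p)
        + (-(2*((m:ℝ)+1)) * Stmt9.DD Stmt9.et g p) * (p.2 i)^2 := by
    intro i
    rw [hxi i, hti, hpt]; ring
  rw [Finset.sum_congr rfl fun i _ => hterm i, Finset.sum_add_distrib,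
    ← Finset.mul_sum, ← Finset.mul_sum, hpx]
  have hS : ∑ i, p.2 i * Stmt9.DD (Stmt9.ex i) g p
      = (-(((n:ℝ) - 2*((m:ℝ)+1) + 2)/2) - 2*(m:ℝ)) * g p - Stmt9.DD Stmt9.et g p := by
    push_cast at heu
    linarith [heu]
  rw [hS]
  push_cast
  ring
end

section
/- Let n > 2k ≥ 2 be integers and set α := (n−2k)/6. For all smooth functions u, v on an open subset of ℝ × ℝ^{n+1} one has, identically: Σ_{a+b+c=k} A_{a,b,c}·Δ̃^a((Δ̃^b u)·(Δ̃^c v)) = Σ_{a+b=k} (k!/(a!·b!))·( Γ(α+a)·Γ(α+b)² / (Γ(α)·Γ(α+k)²) )·D_{a, −(n−2k)/3, −(n−2k)/3 − 2b}[Δ̃^b u](v). -/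
/-- The Ovsienko–Redou coefficient
`A_{a,b,c} = (k!/(a!b!c!))·Γ(α+a+b)·Γ(α+a+c)·Γ(α+b+c)/(Γ(α)·Γ(α+k)²)`, `α = (n−2k)/6`. -/
noncomputable def ORA (n k a b c : ℕ) : ℝ :=
  ((k.factorial : ℝ) / ((a.factorial : ℝ) * (b.factorial : ℝ) * (c.factorial : ℝ)))
  * Real.Gamma (((n:ℝ) - 2*k)/6 + a + b)
  * Real.Gamma (((n:ℝ) - 2*k)/6 + a + c)
  * Real.Gamma (((n:ℝ) - 2*k)/6 + b + c)
  / (Real.Gamma (((n:ℝ) - 2*k)/6) * Real.Gamma (((n:ℝ) - 2*k)/6 + k)^2)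

/-- The Ovsienko–Redou ambient operator `D̃_{2k}(u ⊗ v) = Σ_{a+b+c=k} A_{a,b,c}·Δ̃^a((Δ̃^b u)(Δ̃^c v))`. -/
noncomputable def ORop {n : ℕ} (k : ℕ) (u v : Amb n → ℝ) : Amb n → ℝ :=
  fun p => ∑ abc ∈ Finset.HasAntidiagonal.antidiagonal k, ∑ bc ∈ Finset.HasAntidiagonal.antidiagonal abc.2,
    ORA n k abc.1 bc.1 bc.2
      * LapA^[abc.1] (fun q => LapA^[bc.1] u q * LapA^[bc.2] v q) p

lemma gamma_poch (x : ℝ) (hx : 0 < x) (j : ℕ) :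
    Real.Gamma (x + j) = poch x j * Real.Gamma x := by
  induction j with
  | zero => simp [poch]
  | succ j ih =>
    have h1 : x + ((j:ℕ)+1 : ℕ) = (x + j) + 1 := by push_cast; ring
    have h2 : x + (j:ℝ) ≠ 0 := by positivity
    rw [h1, Real.Gamma_add_one h2, ih, poch, poch, ascPochhammer_succ_right]
    simp [Polynomial.eval_mul]
    ring

/-- eqn (3.5), or-to-cy: for `n > 2k ≥ 2`, `α = (n−2k)/6`, and smooth
`u, v` on an open set, `Σ_{a+b+c=k} A_{a,b,c}·Δ̃^a((Δ̃^b u)(Δ̃^c v))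
 = Σ_{a+b=k} (k!/(a!b!))·(Γ(α+a)Γ(α+b)²/(Γ(α)Γ(α+k)²))·D_{a,−(n−2k)/3,−(n−2k)/3−2b}[Δ̃^b u](v)`. -/
theorem stmt_10 (n k : ℕ) (hk : 1 ≤ k) (hnk : 2*k < n)
    (U : Set (Amb n)) (hU : IsOpen U) (u v : Amb n → ℝ)
    (hu : ContDiffOn ℝ (⊤ : ℕ∞) u U) (hv : ContDiffOn ℝ (⊤ : ℕ∞) v U)
    (p : Amb n) (hp : p ∈ U) :
    ORop k u v p
      = ∑ ab ∈ Finset.HasAntidiagonal.antidiagonal k,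
          ((k.factorial : ℝ) / ((ab.1.factorial : ℝ) * (ab.2.factorial : ℝ)))
          * (Real.Gamma (((n:ℝ) - 2*k)/6 + ab.1) * Real.Gamma (((n:ℝ) - 2*k)/6 + ab.2)^2
             / (Real.Gamma (((n:ℝ) - 2*k)/6) * Real.Gamma (((n:ℝ) - 2*k)/6 + k)^2))
          * CY ab.1 (-((n:ℝ) - 2*k)/3) (-((n:ℝ) - 2*k)/3 - 2*ab.2) (LapA^[ab.2] u) v p := by
  have hnk' : (2*k : ℝ) < n := by exact_mod_cast hnk
  have hα0 : 0 < ((n:ℝ) - 2*k)/6 := by push_cast at hnk' ⊢; linarith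
  simp only [ORop, CY, ORA, Finset.mul_sum]
  rw [Finset.sum_sigma' (Finset.HasAntidiagonal.antidiagonal k) (fun abc => Finset.HasAntidiagonal.antidiagonal abc.2),
      Finset.sum_sigma' (Finset.HasAntidiagonal.antidiagonal k) (fun ab => Finset.HasAntidiagonal.antidiagonal ab.1)]
  refine Finset.sum_nbij'
    (fun x => ⟨(x.1.1 + x.2.2, x.2.1), (x.1.1, x.2.2)⟩)
    (fun y => ⟨(y.2.1, y.1.2 + y.2.2), (y.1.2, y.2.2)⟩)
    ?_ ?_ ?_ ?_ ?_
  · rintro ⟨⟨a, m⟩, ⟨b, c⟩⟩ hmem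
    simp only [Finset.mem_sigma, Finset.HasAntidiagonal.mem_antidiagonal] at hmem ⊢
    exact ⟨by omega, trivial⟩
  · rintro ⟨⟨m, b⟩, ⟨a, c⟩⟩ hmem
    simp only [Finset.mem_sigma, Finset.HasAntidiagonal.mem_antidiagonal] at hmem ⊢
    exact ⟨by omega, trivial⟩
  · rintro ⟨⟨a, m⟩, ⟨b, c⟩⟩ hmem
    simp only [Finset.mem_sigma, Finset.HasAntidiagonal.mem_antidiagonal] at hmem
    simp only [Sigma.mk.inj_iff, Prod.mk.injEq]
    exact ⟨⟨trivial, by omega⟩, HEq.rfl⟩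
  · rintro ⟨⟨m, b⟩, ⟨a, c⟩⟩ hmem
    simp only [Finset.mem_sigma, Finset.HasAntidiagonal.mem_antidiagonal] at hmem
    simp only [Sigma.mk.inj_iff, Prod.mk.injEq]
    exact ⟨⟨by omega, trivial⟩, HEq.rfl⟩
  · rintro ⟨⟨a, m⟩, ⟨b, c⟩⟩ hmem
    simp only [Finset.mem_sigma, Finset.HasAntidiagonal.mem_antidiagonal] at hmem
    obtain ⟨habc, hbc⟩ := hmem
    simp only
    rw [← mul_assoc]
    congr 1
    have hb : (a:ℝ) + (b:ℝ) + (c:ℝ) = (k:ℝ) := by exact_mod_cast (by omega : a + b + c = k)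
    set α : ℝ := ((n:ℝ) - 2*k)/6 with hαdef
    have harg1 : ((n:ℝ) - 2 * ((a + c : ℕ):ℝ)) / 2 + -((n:ℝ) - 2 * (k:ℝ)) / 3 = α + b := by
      rw [hαdef]; push_cast; linarith
    have harg2 : -(-((n:ℝ) - 2 * (k:ℝ)) / 3) - (-((n:ℝ) - 2 * (k:ℝ)) / 3 - 2 * (b:ℝ))
        - ((n:ℝ) - 2 * ((a+c:ℕ):ℝ)) / 2 = α + b := by
      rw [hαdef]; push_cast; linarith
    rw [harg1, harg2]
    have hb0 : 0 < α + b := by positivity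
    rw [show α + ↑a + ↑b = (α + ↑b) + ↑a by ring,
        show α + ↑b + ↑c = (α + ↑b) + ↑c by ring,
        gamma_poch _ hb0 a, gamma_poch _ hb0 c,
        Nat.cast_choose ℝ (Nat.le_add_right a c), Nat.add_sub_cancel_left]
    have h1 : Real.Gamma α ≠ 0 := (Real.Gamma_pos_of_pos hα0).ne'
    have h2 : Real.Gamma (α + k) ≠ 0 := (Real.Gamma_pos_of_pos (by positivity)).ne'
    have h3 : Real.Gamma (α + b) ≠ 0 := (Real.Gamma_pos_of_pos hb0).ne'
    have f1 : (a.factorial : ℝ) ≠ 0 := Nat.cast_ne_zero.mpr a.factorial_ne_zero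
    have f2 : (b.factorial : ℝ) ≠ 0 := Nat.cast_ne_zero.mpr b.factorial_ne_zero
    have f3 : (c.factorial : ℝ) ≠ 0 := Nat.cast_ne_zero.mpr c.factorial_ne_zero
    have f4 : ((a+c).factorial : ℝ) ≠ 0 := Nat.cast_ne_zero.mpr (a+c).factorial_ne_zero
    have hac : ((a+c : ℕ):ℝ) = (a:ℝ) + c := by push_cast; ring
    rw [hac]
    field_simp
    ring
end
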